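/- arXiv:1007.0346 — 11 statements merged into one kernel-verified Lean document; each statement's English description precedes it below -/
import Mathlib

section
/- If G is an abelian group, φ an endomorphism of G, and N a finite-index subgroup of G, then for every positive integer n the group B_n(φ,N) has finite index in G, and the sequence α_n = |B_n(φ,N)/B_{n+1}(φ,N)| is eventually constant; in particular the limit H*(φ,N) = lim_{n→∞} (log|G/B_n(φ,N)|)/n exists and is finite. -/
open Filter Topology ENNReal

variable {G : Type*} [AddCommGroup G]

/-- `B_n(φ,N) = N ∩ φ⁻¹(N) ∩ … ∩ φ^{-(n-1)}(N)`. -/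
noncomputable def Bsub (φ : AddMonoid.End G) (N : AddSubgroup G) (n : ℕ) : AddSubgroup G :=
  ⨅ i ∈ Finset.range n, N.comap (φ ^ i : AddMonoid.End G)

lemma mem_Bsub {φ : AddMonoid.End G} {N : AddSubgroup G} {n : ℕ} {x : G} :
    x ∈ Bsub φ N n ↔ ∀ i < n, (φ ^ i) x ∈ N := by
  simp only [Bsub, AddSubgroup.mem_iInf, Finset.mem_range, AddSubgroup.mem_comap]
  exact Iff.rfl

lemma Bsub_succ' (φ : AddMonoid.End G) (N : AddSubgroup G) (n : ℕ) :
    Bsub φ N (n + 1) = N ⊓ (Bsub φ N n).comap (φ : G →+ G) := by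
  ext x
  simp only [AddSubgroup.mem_inf, AddSubgroup.mem_comap, mem_Bsub]
  erw [AddSubgroup.mem_comap, mem_Bsub]
  constructor
  · intro h
    refine ⟨by simpa using h 0 (Nat.succ_pos n), fun i hi => ?_⟩
    have := h (i + 1) (by omega)
    rwa [pow_succ] at this
  · rintro ⟨h0, h⟩ i hi
    match i with
    | 0 => simpa using h0
    | (j + 1) =>
      rw [pow_succ]
      exact h j (by omega)

lemma Bsub_succ_le (φ : AddMonoid.End G) (N : AddSubgroup G) (n : ℕ) :
    Bsub φ N (n + 1) ≤ Bsub φ N n := fun x hx =>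
  mem_Bsub.2 fun i hi => mem_Bsub.1 hx i (by omega)

lemma Bsub_finiteIndex (φ : AddMonoid.End G) (N : AddSubgroup G) (hN : N.FiniteIndex) (n : ℕ) :
    (Bsub φ N n).FiniteIndex := by
  apply AddSubgroup.finiteIndex_iInf'
  intro i _
  constructor
  erw [AddSubgroup.index_comap]
  intro h
  have hdvd : N.relIndex (φ ^ i : AddMonoid.End G).range ∣ N.index :=
    AddSubgroup.relIndex_dvd_index_of_normal N _
  rw [h] at hdvd
  exact hN.index_ne_zero (zero_dvd_iff.mp hdvd)

/-- The successive relative index. -/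
noncomputable def alph (φ : AddMonoid.End G) (N : AddSubgroup G) (n : ℕ) : ℕ :=
  (Bsub φ N (n + 1)).relIndex (Bsub φ N n)

lemma alph_ne_zero (φ : AddMonoid.End G) (N : AddSubgroup G) (hN : N.FiniteIndex) (n : ℕ) :
    alph φ N n ≠ 0 := by
  have h := AddSubgroup.relIndex_mul_index (Bsub_succ_le φ N n)
  intro hc
  rw [alph] at hc
  rw [hc, zero_mul] at h
  exact (Bsub_finiteIndex φ N hN (n + 1)).index_ne_zero h.symm

lemma alph_antitone (φ : AddMonoid.End G) (N : AddSubgroup G) (hN : N.FiniteIndex) (n : ℕ) :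
    alph φ N (n + 1) ≤ alph φ N n := by
  -- the restriction of φ to B_{n+1} lands in B_n
  have hmap : ∀ x : (Bsub φ N (n + 1)), φ (x : G) ∈ Bsub φ N n := by
    intro x
    rw [mem_Bsub]
    intro i hi
    have h := mem_Bsub.1 x.2 (i + 1) (by omega)
    rw [pow_succ] at h
    exact h
  have hfi : ((Bsub φ N (n + 1)).addSubgroupOf (Bsub φ N n)).FiniteIndex := by
    constructor
    exact alph_ne_zero φ N hN n
  haveI := hfi
  haveI : Finite ((Bsub φ N n) ⧸ (Bsub φ N (n + 1)).addSubgroupOf (Bsub φ N n)) :=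
    AddSubgroup.finite_quotient_of_finiteIndex
  -- the homomorphism induced by φ
  let g : (Bsub φ N (n + 1)) →+ (Bsub φ N n) :=
    AddMonoidHom.codRestrict ((φ : G →+ G).comp (Bsub φ N (n + 1)).subtype) _ hmap
  let f : (Bsub φ N (n + 1)) →+
      ((Bsub φ N n) ⧸ (Bsub φ N (n + 1)).addSubgroupOf (Bsub φ N n)) :=
    (QuotientAddGroup.mk' _).comp g
  have hker : f.ker = (Bsub φ N (n + 2)).addSubgroupOf (Bsub φ N (n + 1)) := by
    ext x
    have hx1 : (x : G) ∈ N := by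
      have h := mem_Bsub.1 x.2 0 (by omega)
      simpa using h
    simp only [AddMonoidHom.mem_ker, f, AddMonoidHom.comp_apply,
      QuotientAddGroup.mk'_apply, QuotientAddGroup.eq_zero_iff,
      AddSubgroup.mem_addSubgroupOf]
    have hg : (g x : G) = φ (x : G) := rfl
    rw [hg]
    constructor
    · intro h
      rw [mem_Bsub]
      intro i hi
      match i with
      | 0 => simpa using hx1
      | j + 1 =>
        have h2 := mem_Bsub.1 h j (by omega)
        rw [pow_succ]
        exact h2
    · intro h
      rw [mem_Bsub]
      intro i hi
      have h2 := mem_Bsub.1 h (i + 1) (by omega)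
      rw [pow_succ] at h2
      exact h2
  have hinj := QuotientAddGroup.kerLift_injective f
  have hcard : Nat.card ((Bsub φ N (n + 1)) ⧸ f.ker)
      ≤ Nat.card ((Bsub φ N n) ⧸ (Bsub φ N (n + 1)).addSubgroupOf (Bsub φ N n)) :=
    Nat.card_le_card_of_injective _ hinj
  rw [hker] at hcard
  calc alph φ N (n + 1)
      = (((Bsub φ N (n + 2)).addSubgroupOf (Bsub φ N (n + 1)))).index := rfl
    _ = Nat.card ((Bsub φ N (n + 1)) ⧸
          (Bsub φ N (n + 2)).addSubgroupOf (Bsub φ N (n + 1))) :=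
        AddSubgroup.index_eq_card _
    _ ≤ Nat.card ((Bsub φ N n) ⧸ (Bsub φ N (n + 1)).addSubgroupOf (Bsub φ N n)) := hcard
    _ = ((Bsub φ N (n + 1)).addSubgroupOf (Bsub φ N n)).index :=
        (AddSubgroup.index_eq_card _).symm
    _ = alph φ N n := rfl

theorem stmt1 (φ : AddMonoid.End G) (N : AddSubgroup G) (hN : N.FiniteIndex) :
    (∀ n : ℕ, 0 < n → (Bsub φ N n).FiniteIndex) ∧
    (∃ c : ℕ, ∀ᶠ n in atTop, (Bsub φ N (n + 1)).relIndex (Bsub φ N n) = c) ∧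
    ∃ ℓ : ℝ, Tendsto (fun n : ℕ => Real.log ((Bsub φ N n).index) / n) atTop (𝓝 ℓ) := by
  have hanti : Antitone (alph φ N) := antitone_nat_of_succ_le (alph_antitone φ N hN)
  -- eventual constancy
  set c : ℕ := sInf (Set.range (alph φ N)) with hc
  obtain ⟨N₀, hN₀⟩ : ∃ N₀, alph φ N N₀ = c := Nat.sInf_mem (Set.range_nonempty _)
  have hev : ∀ n, N₀ ≤ n → alph φ N n = c := by
    intro n hn
    refine le_antisymm (hN₀ ▸ hanti hn) (Nat.sInf_le ⟨n, rfl⟩)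
  have hcne : c ≠ 0 := hN₀ ▸ alph_ne_zero φ N hN N₀
  refine ⟨fun n _ => Bsub_finiteIndex φ N hN n, ⟨c, eventually_atTop.2 ⟨N₀, hev⟩⟩, ?_⟩
  -- index formula for n ≥ N₀
  have hidx : ∀ n, N₀ ≤ n → (Bsub φ N n).index = (Bsub φ N N₀).index * c ^ (n - N₀) := by
    intro n hn
    induction n, hn using Nat.le_induction with
    | base => simp
    | succ n hn ih =>
      have h := AddSubgroup.relIndex_mul_index (Bsub_succ_le φ N n)
      have : alph φ N n * (Bsub φ N n).index = (Bsub φ N (n + 1)).index := h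
      rw [hev n hn] at this
      rw [← this, ih, show n + 1 - N₀ = (n - N₀) + 1 by omega, pow_succ]
      ring
  set a : ℝ := Real.log ((Bsub φ N N₀).index) with ha
  set L : ℝ := Real.log c with hL
  refine ⟨L, ?_⟩
  have h0 : Tendsto (fun n : ℕ => (a - (N₀ : ℝ) * L) / n + L) atTop (𝓝 L) := by
    have h := (tendsto_const_div_atTop_nhds_zero_nat (a - (N₀ : ℝ) * L)).add
      (tendsto_const_nhds : Tendsto (fun _ : ℕ => L) atTop (𝓝 L))
    simpa using h
  refine h0.congr' ?_
  filter_upwards [eventually_ge_atTop (N₀ + 1)] with n hn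
  have hn0 : N₀ ≤ n := by omega
  have hnz : (n : ℝ) ≠ 0 := Nat.cast_ne_zero.2 (by omega)
  have hIdx0 : (((Bsub φ N N₀).index : ℝ)) ≠ 0 :=
    Nat.cast_ne_zero.2 (Bsub_finiteIndex φ N hN N₀).index_ne_zero
  have hcR : ((c : ℝ)) ≠ 0 := Nat.cast_ne_zero.2 hcne
  have hlog : Real.log (((Bsub φ N n).index : ℝ)) = a + ((n : ℝ) - (N₀ : ℝ)) * L := by
    rw [hidx n hn0]
    push_cast
    rw [Real.log_mul hIdx0 (pow_ne_zero _ hcR), Real.log_pow, Nat.cast_sub hn0]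
  rw [hlog]
  field_simp
  ring
end

section
/- Let (G,τ) be a topological abelian group and φ: (G,τ) → (G,τ) a continuous endomorphism. Then for every positive integer k, ent*_τ(φ^k) = k · ent*_τ(φ). -/
open Filter Topology ENNReal

variable {G : Type*} [AddCommGroup G]

/-- `H*(φ,N) = lim_n log|G/B_n(φ,N)|/n`. -/
noncomputable def Hstar (φ : AddMonoid.End G) (N : AddSubgroup G) : ℝ :=
  limUnder atTop fun n : ℕ => Real.log ((Bsub φ N n).index) / n

/-- The topological adjoint entropy: sup of `H*(φ,N)` over `τ`-open finite-index subgroups. -/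
noncomputable def entStar (t : TopologicalSpace G) (φ : AddMonoid.End G) : ℝ≥0∞ :=
  ⨆ (N : AddSubgroup G) (_ : @IsOpen G t ↑N ∧ N.FiniteIndex), ENNReal.ofReal (Hstar φ N)

namespace EntStarAux

lemma mem_comap_End {N : AddSubgroup G} {f : AddMonoid.End G} {g : G} :
    g ∈ N.comap f ↔ f g ∈ N := Iff.rfl

lemma mem_Bsub {φ : AddMonoid.End G} {N : AddSubgroup G} {n : ℕ} {g : G} :
    g ∈ Bsub φ N n ↔ ∀ i < n, (φ ^ i) g ∈ N := by
  simp only [Bsub, AddSubgroup.mem_iInf, Finset.mem_range, AddSubgroup.mem_comap, mem_comap_End]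

lemma comap_index_ne_zero {N : AddSubgroup G} (hN : N.index ≠ 0) (f : AddMonoid.End G) :
    (N.comap f).index ≠ 0 := by
  erw [AddSubgroup.index_comap]
  exact fun h => hN (Nat.eq_zero_of_zero_dvd (h ▸ AddSubgroup.relIndex_dvd_index_of_normal N _))

lemma Bsub_succ (φ : AddMonoid.End G) (N : AddSubgroup G) (n : ℕ) :
    Bsub φ N (n + 1) = Bsub φ N n ⊓ N.comap (φ ^ n : AddMonoid.End G) := by
  ext g
  simp only [mem_Bsub, AddSubgroup.mem_inf, AddSubgroup.mem_comap, mem_comap_End, Nat.lt_succ_iff_lt_or_eq]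
  constructor
  · exact fun h => ⟨fun i hi => h i (Or.inl hi), h n (Or.inr rfl)⟩
  · rintro ⟨h1, h2⟩ i (hi | rfl)
    · exact h1 i hi
    · exact h2

lemma Bsub_index_ne_zero (φ : AddMonoid.End G) {N : AddSubgroup G} (hN : N.FiniteIndex) :
    ∀ n, (Bsub φ N n).index ≠ 0 := by
  intro n
  induction n with
  | zero =>
    have : Bsub φ N 0 = ⊤ := by ext g; simp [mem_Bsub]
    simp [this]
  | succ n ih =>
    rw [Bsub_succ]
    exact AddSubgroup.index_inf_ne_zero ih (comap_index_ne_zero hN.index_ne_zero _)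

lemma Bsub_finiteIndex (φ : AddMonoid.End G) {N : AddSubgroup G} (hN : N.FiniteIndex) (n : ℕ) :
    (Bsub φ N n).FiniteIndex := ⟨Bsub_index_ne_zero φ hN n⟩

lemma Bsub_add (φ : AddMonoid.End G) (N : AddSubgroup G) (m n : ℕ) :
    Bsub φ N (m + n) = Bsub φ N m ⊓ (Bsub φ N n).comap (φ ^ m : AddMonoid.End G) := by
  ext g
  simp only [mem_Bsub, AddSubgroup.mem_inf, AddSubgroup.mem_comap, mem_comap_End]
  constructor
  · intro h
    refine ⟨fun i hi => h i (lt_of_lt_of_le hi (Nat.le_add_right m n)), fun i hi => ?_⟩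
    have : (φ ^ i) ((φ ^ m) g) = (φ ^ (m + i)) g := by
      rw [add_comm, pow_add]; rfl
    rw [this]
    exact h (m + i) (by omega)
  · rintro ⟨h1, h2⟩ i hi
    rcases lt_or_ge i m with h | h
    · exact h1 i h
    · have h2' := h2 (i - m) (by omega)
      rwa [show (φ ^ (i - m)) ((φ ^ m) g) = (φ ^ i) g by
        rw [show (φ ^ (i - m)) ((φ ^ m) g) = (φ ^ (i - m) * φ ^ m) g from rfl, ← pow_add]
        congr 2
        omega] at h2'

/-- The subadditive sequence `c n = log |G / B_n(φ,N)|`. -/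
lemma Bsub_log_subadditive (φ : AddMonoid.End G) {N : AddSubgroup G} (hN : N.FiniteIndex) :
    Subadditive fun n : ℕ => Real.log ((Bsub φ N n).index) := by
  intro m n
  have hm := Bsub_index_ne_zero φ hN m
  have hn := Bsub_index_ne_zero φ hN n
  have hle : (Bsub φ N (m + n)).index ≤ (Bsub φ N m).index * (Bsub φ N n).index := by
    rw [Bsub_add]
    calc (Bsub φ N m ⊓ (Bsub φ N n).comap (φ ^ m : AddMonoid.End G)).index
        ≤ (Bsub φ N m).index * ((Bsub φ N n).comap (φ ^ m : AddMonoid.End G)).index :=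
          AddSubgroup.index_inf_le
      _ ≤ (Bsub φ N m).index * (Bsub φ N n).index := by
          apply Nat.mul_le_mul_left
          erw [AddSubgroup.index_comap]
          exact Nat.le_of_dvd (Nat.pos_of_ne_zero hn)
            (AddSubgroup.relIndex_dvd_index_of_normal _ _)
  have hpos : (0 : ℝ) < ((Bsub φ N (m + n)).index : ℝ) := by
    exact_mod_cast Nat.pos_of_ne_zero (Bsub_index_ne_zero φ hN (m + n))
  calc Real.log ((Bsub φ N (m + n)).index)
      ≤ Real.log (((Bsub φ N m).index : ℝ) * ((Bsub φ N n).index : ℝ)) := by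
        apply Real.log_le_log hpos
        exact_mod_cast hle
    _ = Real.log ((Bsub φ N m).index) + Real.log ((Bsub φ N n).index) :=
        Real.log_mul (by exact_mod_cast hm) (by exact_mod_cast hn)

lemma log_div_nonneg (φ : AddMonoid.End G) (N : AddSubgroup G) (n : ℕ) :
    0 ≤ Real.log ((Bsub φ N n).index) / n := by
  apply div_nonneg _ (Nat.cast_nonneg n)
  rcases Nat.eq_zero_or_pos (Bsub φ N n).index with h | h
  · simp [h]
  · exact Real.log_nonneg (by exact_mod_cast h)

lemma tendsto_Hstar (φ : AddMonoid.End G) {N : AddSubgroup G} (hN : N.FiniteIndex) :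
    Tendsto (fun n : ℕ => Real.log ((Bsub φ N n).index) / n) atTop (𝓝 (Hstar φ N)) := by
  have hsub := Bsub_log_subadditive φ hN
  have hbdd : BddBelow (Set.range fun n : ℕ => Real.log ((Bsub φ N n).index) / n) :=
    ⟨0, by rintro x ⟨n, rfl⟩; exact log_div_nonneg φ N n⟩
  have h := hsub.tendsto_lim hbdd
  rwa [Hstar, h.limUnder_eq]

lemma Hstar_nonneg (φ : AddMonoid.End G) {N : AddSubgroup G} (hN : N.FiniteIndex) :
    0 ≤ Hstar φ N :=
  ge_of_tendsto' (tendsto_Hstar φ hN) (log_div_nonneg φ N)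

lemma Hstar_le_of_le (ψ : AddMonoid.End G) {M N : AddSubgroup G} (hM : M.FiniteIndex)
    (hMN : M ≤ N) : Hstar ψ N ≤ Hstar ψ M := by
  have hN : N.FiniteIndex :=
    ⟨fun h => hM.index_ne_zero (Nat.eq_zero_of_zero_dvd (h ▸ AddSubgroup.index_dvd_of_le hMN))⟩
  refine le_of_tendsto_of_tendsto' (tendsto_Hstar ψ hN) (tendsto_Hstar ψ hM) fun n => ?_
  apply div_le_div_of_nonneg_right ?_ (Nat.cast_nonneg n) |>.trans_eq rfl
  have hle : Bsub ψ M n ≤ Bsub ψ N n := by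
    intro g hg
    rw [mem_Bsub] at hg ⊢
    exact fun i hi => hMN (hg i hi)
  have hdvd := AddSubgroup.index_dvd_of_le hle
  have hMne := Bsub_index_ne_zero ψ hM n
  have hn0 : 0 < (Bsub ψ N n).index :=
    Nat.pos_of_ne_zero (Bsub_index_ne_zero ψ hN n)
  apply Real.log_le_log (by exact_mod_cast hn0)
  exact_mod_cast Nat.le_of_dvd (Nat.pos_of_ne_zero hMne) hdvd

lemma Bsub_le_self (φ : AddMonoid.End G) (N : AddSubgroup G) {k : ℕ} (hk : 0 < k) :
    Bsub φ N k ≤ N := by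
  intro g hg
  have := (mem_Bsub.1 hg) 0 hk
  simpa using this

lemma Bsub_pow (φ : AddMonoid.End G) (N : AddSubgroup G) {k : ℕ} (hk : 0 < k) (n : ℕ) :
    Bsub (φ ^ k) (Bsub φ N k) n = Bsub φ N (n * k) := by
  ext g
  simp only [mem_Bsub]
  constructor
  · intro h l hl
    have hi : l / k < n := Nat.div_lt_iff_lt_mul hk |>.2 hl
    have hj : l % k < k := Nat.mod_lt _ hk
    have h2 := h (l / k) hi (l % k) hj
    have key : (φ ^ (l % k)) (((φ ^ k) ^ (l / k)) g) = (φ ^ l) g := by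
      rw [show (φ ^ (l % k)) (((φ ^ k) ^ (l / k)) g)
            = (φ ^ (l % k) * (φ ^ k) ^ (l / k)) g from rfl, ← pow_mul, ← pow_add]
      congr 2
      exact Nat.mod_add_div l k
    rwa [key] at h2
  · intro h i hi j hj
    have key : (φ ^ j) (((φ ^ k) ^ i) g) = (φ ^ (j + k * i)) g := by
      rw [show (φ ^ j) (((φ ^ k) ^ i) g) = (φ ^ j * (φ ^ k) ^ i) g from rfl,
        ← pow_mul, ← pow_add]
    rw [key]
    apply h
    calc j + k * i < k + k * i := by omega
      _ = k * (i + 1) := by ring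
      _ ≤ k * n := Nat.mul_le_mul_left k hi
      _ = n * k := Nat.mul_comm k n

lemma Hstar_pow (φ : AddMonoid.End G) {N : AddSubgroup G} (hN : N.FiniteIndex)
    {k : ℕ} (hk : 0 < k) :
    Hstar (φ ^ k) (Bsub φ N k) = k * Hstar φ N := by
  have hM : (Bsub φ N k).FiniteIndex := Bsub_finiteIndex φ hN k
  have hcomp : Tendsto (fun n : ℕ => n * k) atTop atTop :=
    Filter.tendsto_atTop_atTop.2 fun b => ⟨b, fun a ha => le_trans ha (Nat.le_mul_of_pos_right a hk)⟩
  have h1 : Tendsto (fun n : ℕ => Real.log ((Bsub φ N (n * k)).index) / (n * k : ℕ))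
      atTop (𝓝 (Hstar φ N)) := (tendsto_Hstar φ hN).comp hcomp
  have h2 : Tendsto (fun n : ℕ => (k : ℝ) * (Real.log ((Bsub φ N (n * k)).index) / (n * k : ℕ)))
      atTop (𝓝 ((k : ℝ) * Hstar φ N)) := h1.const_mul _
  have h3 : Tendsto (fun n : ℕ => Real.log ((Bsub (φ ^ k) (Bsub φ N k) n).index) / n)
      atTop (𝓝 ((k : ℝ) * Hstar φ N)) := by
    apply h2.congr'
    filter_upwards [eventually_ge_atTop 1] with n hn
    rw [Bsub_pow φ N hk n]
    have hn' : (n : ℝ) ≠ 0 := by positivity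
    have hk' : (k : ℝ) ≠ 0 := by positivity
    push_cast
    field_simp
  rw [Hstar, h3.limUnder_eq]

lemma Bsub_isOpen [TopologicalSpace G] (φ : AddMonoid.End G) (hφ : Continuous φ)
    {N : AddSubgroup G} (hN : IsOpen (N : Set G)) (n : ℕ) :
    IsOpen ((Bsub φ N n) : Set G) := by
  have hpow : ∀ i : ℕ, Continuous fun g : G => (φ ^ i) g := by
    intro i
    induction i with
    | zero => simpa using continuous_id'
    | succ i ih =>
      have : ∀ g : G, (φ ^ (i + 1)) g = (φ ^ i) (φ g) := by
        intro g
        rw [pow_succ]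
        rfl
      simpa only [this, Function.comp_def] using ih.comp hφ
  have : ((Bsub φ N n) : Set G) = ⋂ i ∈ Finset.range n, (fun g : G => (φ ^ i) g) ⁻¹' N := by
    ext g
    simp [mem_Bsub, Set.mem_iInter]
  rw [this]
  exact isOpen_biInter_finset fun i _ => hN.preimage (hpow i)

end EntStarAux

theorem stmt4 [TopologicalSpace G] [IsTopologicalAddGroup G]
    (φ : AddMonoid.End G) (hφ : Continuous φ) (k : ℕ) (hk : 0 < k) :
    entStar ‹TopologicalSpace G› (φ ^ k) = (k : ℝ≥0∞) * entStar ‹TopologicalSpace G› φ := by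
  open EntStarAux in
  apply le_antisymm
  · rw [entStar]
    apply iSup₂_le
    rintro N ⟨hNo, hNf⟩
    have hle : Hstar (φ ^ k) N ≤ (k : ℝ) * Hstar φ N := by
      calc Hstar (φ ^ k) N ≤ Hstar (φ ^ k) (Bsub φ N k) :=
            Hstar_le_of_le _ (Bsub_finiteIndex φ hNf k) (Bsub_le_self φ N hk)
        _ = (k : ℝ) * Hstar φ N := Hstar_pow φ hNf hk
    have hh : ENNReal.ofReal (Hstar φ N) ≤ entStar ‹TopologicalSpace G› φ := by
      rw [entStar]
      exact le_iSup₂ (f := fun N _ => ENNReal.ofReal (Hstar φ N)) N ⟨hNo, hNf⟩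
    refine le_trans (ENNReal.ofReal_le_ofReal hle) ?_
    rw [ENNReal.ofReal_mul (Nat.cast_nonneg k), ENNReal.ofReal_natCast]
    exact mul_le_mul_right hh _
  · rw [entStar, entStar, ENNReal.mul_iSup]
    apply iSup_le
    intro N
    rw [ENNReal.mul_iSup]
    apply iSup_le
    rintro ⟨hNo, hNf⟩
    have heq : (k : ℝ≥0∞) * ENNReal.ofReal (Hstar φ N)
        = ENNReal.ofReal (Hstar (φ ^ k) (Bsub φ N k)) := by
      rw [Hstar_pow φ hNf hk, ENNReal.ofReal_mul (Nat.cast_nonneg k), ENNReal.ofReal_natCast]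
    rw [heq]
    exact le_iSup₂ (f := fun N _ => ENNReal.ofReal (Hstar (φ ^ k) N)) (Bsub φ N k)
      ⟨Bsub_isOpen φ hφ hNo k, Bsub_finiteIndex φ hNf k⟩
end

section
/- Let (G,τ) be a topological abelian group, φ: (G,τ) → (G,τ) a continuous endomorphism and H a φ-invariant subgroup of G. Let φ̄ be the induced continuous endomorphism of G/H with the quotient topology τ_q. Then ent*_{τ_q}(φ̄) ≤ ent*_τ(φ). Moreover, for every τ_q-open finite-index subgroup N/H of G/H (with N ⊇ H open of finite index in G), H*(φ̄, N/H) = H*(φ, N). -/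
open Filter Topology ENNReal

variable {G : Type*} [AddCommGroup G]

lemma bar_pow {G' : Type*} [AddCommGroup G'] (φ : AddMonoid.End G) (ψ : AddMonoid.End G')
    (π : G →+ G') (hcomm : ∀ g, ψ (π g) = π (φ g)) (i : ℕ) (g : G) :
    (ψ ^ i) (π g) = π ((φ ^ i) g) := by
  induction i with
  | zero => rfl
  | succ n ih =>
      have h1 : (ψ ^ (n + 1)) (π g) = ψ ((ψ ^ n) (π g)) := by
        rw [pow_succ']; rfl
      have h2 : (φ ^ (n + 1)) g = φ ((φ ^ n) g) := by
        rw [pow_succ']; rfl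
      rw [h1, ih, hcomm, h2]

lemma Bsub_comap (φ : AddMonoid.End G) (H N : AddSubgroup G)
    (hinv : H ≤ H.comap (φ : G →+ G)) (hHN : H ≤ N) (n : ℕ) :
    (Bsub (QuotientAddGroup.map H H (φ : G →+ G) hinv)
        (N.map (QuotientAddGroup.mk' H)) n).comap (QuotientAddGroup.mk' H)
      = Bsub φ N n := by
  have hker : (N.map (QuotientAddGroup.mk' H)).comap (QuotientAddGroup.mk' H) = N := by
    rw [AddSubgroup.comap_map_eq, QuotientAddGroup.ker_mk', sup_of_le_left hHN]
  have hcomm : ∀ g : G,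
      (QuotientAddGroup.map H H (φ : G →+ G) hinv) (QuotientAddGroup.mk' H g)
        = QuotientAddGroup.mk' H (φ g) := fun g => rfl
  ext g
  simp only [Bsub, AddSubgroup.mem_comap, AddSubgroup.mem_iInf]
  refine forall₂_congr fun i hi => ?_
  change ((_ : AddMonoid.End (G ⧸ H)) ^ i) (QuotientAddGroup.mk' H g) ∈
      N.map (QuotientAddGroup.mk' H) ↔ (φ ^ i) g ∈ N
  rw [bar_pow φ _ (QuotientAddGroup.mk' H) hcomm i g]
  constructor
  · intro h
    have h' : (φ ^ i) g ∈
        (N.map (QuotientAddGroup.mk' H)).comap (QuotientAddGroup.mk' H) := h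
    rwa [hker] at h'
  · intro h
    have h' : (φ ^ i) g ∈
        (N.map (QuotientAddGroup.mk' H)).comap (QuotientAddGroup.mk' H) := by
      rw [hker]; exact h
    exact h'

lemma Hstar_eq (φ : AddMonoid.End G) (H N : AddSubgroup G)
    (hinv : H ≤ H.comap (φ : G →+ G)) (hHN : H ≤ N) :
    Hstar (G := G ⧸ H) (QuotientAddGroup.map H H (φ : G →+ G) hinv)
        (N.map (QuotientAddGroup.mk' H)) = Hstar φ N := by
  unfold Hstar
  congr 1
  funext n
  rw [← Bsub_comap φ H N hinv hHN n,
    AddSubgroup.index_comap_of_surjective _ (QuotientAddGroup.mk'_surjective H)]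

theorem stmt6 [TopologicalSpace G] [IsTopologicalAddGroup G]
    (φ : AddMonoid.End G) (hφ : Continuous φ)
    (H : AddSubgroup G) (hinv : H ≤ H.comap (φ : G →+ G)) :
    entStar (inferInstance : TopologicalSpace (G ⧸ H))
        (QuotientAddGroup.map H H (φ : G →+ G) hinv)
      ≤ entStar ‹TopologicalSpace G› φ ∧
    ∀ N : AddSubgroup G, IsOpen (N : Set G) → N.FiniteIndex → H ≤ N →
      Hstar (G := G ⧸ H) (QuotientAddGroup.map H H (φ : G →+ G) hinv)
          (N.map (QuotientAddGroup.mk' H))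
        = Hstar φ N := by
  constructor
  · apply iSup₂_le
    intro M ⟨hMopen, hMfin⟩
    set N : AddSubgroup G := M.comap (QuotientAddGroup.mk' H) with hN
    have hsurj := QuotientAddGroup.mk'_surjective H
    have hHN : H ≤ N := by
      intro g hg
      simp only [hN, AddSubgroup.mem_comap]
      have h0 : QuotientAddGroup.mk' H g = 0 := (QuotientAddGroup.eq_zero_iff g).2 hg
      rw [h0]; exact M.zero_mem
    have hmap : N.map (QuotientAddGroup.mk' H) = M :=
      AddSubgroup.map_comap_eq_self_of_surjective hsurj M
    have hopen : IsOpen (N : Set G) := by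
      have h1 : (N : Set G) = (QuotientAddGroup.mk' H) ⁻¹' (M : Set (G ⧸ H)) := rfl
      rw [h1]
      exact hMopen.preimage continuous_quot_mk
    have hfin : N.FiniteIndex := by
      constructor
      rw [AddSubgroup.index_comap_of_surjective _ hsurj]
      exact hMfin.index_ne_zero
    have hH : Hstar (G := G ⧸ H) (QuotientAddGroup.map H H (φ : G →+ G) hinv) M
        = Hstar φ N := by
      rw [← hmap]; exact Hstar_eq φ H N hinv hHN
    rw [hH]
    exact le_iSup₂_of_le N ⟨hopen, hfin⟩ le_rfl
  · intro N _ _ hHN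
    exact Hstar_eq φ H N hinv hHN
end

section
/- Let (G,τ) be a topological abelian group, φ: (G,τ) → (G,τ) a continuous endomorphism and H a φ-invariant open finite-index subgroup of G. Then ent*_τ(φ) = ent*_{τ|_H}(φ|_H). -/
open Filter Topology ENNReal

variable {G : Type*} [AddCommGroup G]

lemma limUnder_congr_sub {u v : ℕ → ℝ}
    (h : Tendsto (fun n => u n - v n) atTop (𝓝 0)) :
    limUnder atTop u = limUnder atTop v := by
  have key : ∀ a : ℝ, Tendsto u atTop (𝓝 a) ↔ Tendsto v atTop (𝓝 a) := by
    refine fun a => ⟨fun hu => ?_, fun hv => ?_⟩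
    · simpa using hu.sub h
    · simpa using h.add hv
  simp only [limUnder, lim]
  exact congrArg _ (funext fun a => propext (key a))

lemma aux_log_bound {b b' c : ℕ} (hb' : b' ≠ 0) (hc : c ≠ 0)
    (h1 : b' ≤ b) (h2 : b ≤ b' * c) :
    0 ≤ Real.log b - Real.log b' ∧ Real.log b - Real.log b' ≤ Real.log c := by
  have hb'p : (0:ℝ) < b' := by exact_mod_cast Nat.pos_of_ne_zero hb'
  constructor
  · have h1' : (b':ℝ) ≤ b := by exact_mod_cast h1
    have := Real.log_le_log hb'p h1'
    linarith
  · have h1' : (b':ℝ) ≤ b := by exact_mod_cast h1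
    have hle : (b:ℝ) ≤ (b':ℝ) * c := by exact_mod_cast h2
    have := Real.log_le_log (hb'p.trans_le h1') hle
    rw [Real.log_mul (ne_of_gt hb'p) (by exact_mod_cast hc)] at this
    linarith

lemma aux_finiteIndex_comap {G' : Type*} [AddCommGroup G'] (f : G' →+ G)
    {N : AddSubgroup G} (hN : N.FiniteIndex) : (N.comap f).FiniteIndex := by
  constructor
  rw [AddSubgroup.index_comap]
  intro h
  exact hN.index_ne_zero (N.index_eq_zero_of_relIndex_eq_zero h)

lemma aux_finiteIndex_Bsub (φ : AddMonoid.End G) {N : AddSubgroup G}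
    (hN : N.FiniteIndex) (n : ℕ) : (Bsub φ N n).FiniteIndex :=
  AddSubgroup.finiteIndex_iInf' _ fun _ _ => aux_finiteIndex_comap _ hN

lemma aux_pow_coe {φ : AddMonoid.End G} {H : AddSubgroup G} {ψ : AddMonoid.End H}
    (hψ : ∀ x : H, (ψ x : G) = φ (x : G)) (i : ℕ) (x : H) :
    ((ψ ^ i) x : G) = (φ ^ i) (x : G) := by
  induction i generalizing x with
  | zero => rfl
  | succ k ih =>
      have h1 : (ψ ^ (k+1)) x = (ψ ^ k) (ψ x) := by rw [pow_succ]; rfl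
      have h2 : (φ ^ (k+1)) (x : G) = (φ ^ k) (φ (x : G)) := by rw [pow_succ]; rfl
      rw [h1, h2, ih, hψ]

lemma aux_Bsub_comap {φ : AddMonoid.End G} {H : AddSubgroup G} {ψ : AddMonoid.End H}
    (hψ : ∀ x : H, (ψ x : G) = φ (x : G)) (N : AddSubgroup G) (n : ℕ) :
    Bsub ψ (N.comap H.subtype) n = (Bsub φ N n).comap H.subtype := by
  ext x
  simp only [Bsub, AddSubgroup.mem_iInf, AddSubgroup.mem_comap, Finset.mem_range]
  constructor
  · intro h i hi
    have := h i hi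
    show (φ ^ i) (x : G) ∈ N; rw [← aux_pow_coe hψ i x]; exact this
  · intro h i hi
    have := h i hi
    show H.subtype ((ψ ^ i) x) ∈ N
    rwa [show (H.subtype ((ψ ^ i) x) : G) = (φ ^ i) (x : G) from aux_pow_coe hψ i x]

lemma aux_Hstar_eq {φ : AddMonoid.End G} {H : AddSubgroup G} {ψ : AddMonoid.End H}
    (hψ : ∀ x : H, (ψ x : G) = φ (x : G)) (hfi : H.FiniteIndex)
    {N : AddSubgroup G} (hN : N.FiniteIndex) :
    Hstar φ N = Hstar ψ (N.comap H.subtype) := by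
  apply limUnder_congr_sub
  have hc : H.index ≠ 0 := hfi.index_ne_zero
  have bound : ∀ n : ℕ,
      0 ≤ Real.log ((Bsub φ N n).index) - Real.log ((Bsub ψ (N.comap H.subtype) n).index)
      ∧ Real.log ((Bsub φ N n).index) - Real.log ((Bsub ψ (N.comap H.subtype) n).index)
        ≤ Real.log H.index := by
    intro n
    set B := Bsub φ N n with hB
    haveI hBfi : B.FiniteIndex := aux_finiteIndex_Bsub φ hN n
    haveI : (B ⊓ H).FiniteIndex := inferInstance
    have hb' : (Bsub ψ (N.comap H.subtype) n).index = B.relIndex H := by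
      rw [aux_Bsub_comap hψ N n, AddSubgroup.index_comap, AddSubgroup.range_subtype]
    have hinf : B.relIndex H * H.index = (B ⊓ H).index := by
      rw [← AddSubgroup.inf_relIndex_right]
      exact AddSubgroup.relIndex_mul_index inf_le_right
    have hne : (B ⊓ H).index ≠ 0 := ‹(B ⊓ H).FiniteIndex›.index_ne_zero
    have hb'ne : B.relIndex H ≠ 0 := fun h => hne (by rw [← hinf, h, zero_mul])
    have h1 : B.relIndex H ≤ B.index := by
      have h2 : (B ⊓ H).index ≤ B.index * H.index := AddSubgroup.index_inf_le
      rw [← hinf] at h2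
      exact Nat.le_of_mul_le_mul_right h2 (Nat.pos_of_ne_zero hc)
    have h2 : B.index ≤ B.relIndex H * H.index := by
      rw [hinf]; exact AddSubgroup.index_antitone inf_le_left
    rw [hb']
    exact aux_log_bound hb'ne hc h1 h2
  apply squeeze_zero (g := fun n : ℕ => Real.log H.index / n)
  · intro n
    rw [div_sub_div_same]
    exact div_nonneg (bound n).1 (Nat.cast_nonneg n)
  · intro n
    rw [div_sub_div_same]
    exact div_le_div_of_nonneg_right ((bound n).2) (Nat.cast_nonneg n)
  · exact tendsto_const_div_atTop_nhds_zero_nat _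

theorem stmt7 [TopologicalSpace G] [IsTopologicalAddGroup G]
    (φ : AddMonoid.End G) (hφ : Continuous φ)
    (H : AddSubgroup G) (hinv : ∀ x ∈ H, φ x ∈ H)
    (hopen : IsOpen (H : Set G)) (hfi : H.FiniteIndex) :
    entStar ‹TopologicalSpace G› φ
      = entStar (inferInstance : TopologicalSpace H)
          (((φ : G →+ G).comp H.subtype).codRestrict H (fun x => hinv x x.2)) := by
  set ψ : AddMonoid.End H := ((φ : G →+ G).comp H.subtype).codRestrict H (fun x => hinv x x.2)
    with hψdef
  have hψ : ∀ x : H, (ψ x : G) = φ (x : G) := fun x => rfl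
  unfold entStar
  apply le_antisymm
  · refine iSup_le fun N => iSup_le fun hN => ?_
    have hopenM : IsOpen ((N.comap H.subtype : AddSubgroup H) : Set H) := by
      have : ((N.comap H.subtype : AddSubgroup H) : Set H) = Subtype.val ⁻¹' (N : Set G) := rfl
      rw [this]
      exact hN.1.preimage continuous_subtype_val
    have hfiM : (N.comap H.subtype).FiniteIndex := aux_finiteIndex_comap _ hN.2
    rw [aux_Hstar_eq hψ hfi hN.2]
    exact le_iSup_of_le (N.comap H.subtype) (le_iSup_of_le ⟨hopenM, hfiM⟩ le_rfl)
  · refine iSup_le fun M => iSup_le fun hM => ?_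
    have hMN : (M.map H.subtype).comap H.subtype = M :=
      AddSubgroup.comap_map_eq_self_of_injective H.subtype_injective M
    have hfiN : (M.map H.subtype).FiniteIndex := by
      constructor
      rw [AddSubgroup.index_map_subtype]
      exact mul_ne_zero hM.2.index_ne_zero hfi.index_ne_zero
    have hopenN : IsOpen ((M.map H.subtype : AddSubgroup G) : Set G) := by
      have : ((M.map H.subtype : AddSubgroup G) : Set G) = Subtype.val '' (M : Set H) := by
        ext x
        simp [AddSubgroup.mem_map]
      rw [this]
      exact hopen.isOpenMap_subtype_val _ hM.1
    have heq := aux_Hstar_eq hψ hfi hfiN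
    rw [hMN] at heq
    rw [← heq]
    exact le_iSup_of_le (M.map H.subtype) (le_iSup_of_le ⟨hopenN, hfiN⟩ le_rfl)
end

section
/- Let (G,τ) be a topological abelian group and H a dense subgroup of G. Then the map N ↦ N ∩ H is a bijection from the set of τ-open finite-index subgroups of G onto the set of open finite-index subgroups of H (in the subspace topology), with inverse M ↦ closure of M in G. -/
open Filter Topology ENNReal

/-- If `N` is an open subgroup of `G` and `H` is dense, then the natural map
`H → G ⧸ N` is surjective. -/
lemma aux_surj {G : Type*} [AddCommGroup G] [TopologicalSpace G] [IsTopologicalAddGroup G]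
    (H N : AddSubgroup G) (hd : Dense (H : Set G)) (hN : IsOpen (N : Set G)) :
    Function.Surjective ((QuotientAddGroup.mk' N).comp H.subtype) := by
  intro q
  obtain ⟨g, rfl⟩ := QuotientAddGroup.mk'_surjective N q
  have hU : IsOpen ((-g + ·) ⁻¹' (N : Set G)) := hN.preimage (continuous_add_left (-g))
  have hne : ((-g + ·) ⁻¹' (N : Set G)).Nonempty := ⟨g, by simp [N.zero_mem]⟩
  obtain ⟨x, hxH, hxU⟩ := hd.exists_mem_open hU hne
  refine ⟨⟨x, hxH⟩, ?_⟩
  simp only [AddMonoidHom.coe_comp, Function.comp_apply,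
    AddSubgroup.coe_subtype, QuotientAddGroup.mk'_apply]
  exact (QuotientAddGroup.eq ..).mpr (by simpa using N.neg_mem hxU)

/-- If `N` is an open subgroup of `G` and `H` is dense, then `[H : N ∩ H] = [G : N]`. -/
lemma aux_index {G : Type*} [AddCommGroup G] [TopologicalSpace G] [IsTopologicalAddGroup G]
    (H N : AddSubgroup G) (hd : Dense (H : Set G)) (hN : IsOpen (N : Set G)) :
    (N.addSubgroupOf H).index = N.index := by
  have hker : ((QuotientAddGroup.mk' N).comp H.subtype).ker = N.addSubgroupOf H := by
    ext x
    simp [AddMonoidHom.mem_ker, QuotientAddGroup.eq_zero_iff, AddSubgroup.mem_addSubgroupOf]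
  have hsurj := aux_surj H N hd hN
  rw [← hker, AddSubgroup.index_eq_card, N.index_eq_card]
  exact Nat.card_congr (QuotientAddGroup.quotientKerEquivOfSurjective _ hsurj).toEquiv

theorem stmt8 {G : Type*} [AddCommGroup G] [TopologicalSpace G] [IsTopologicalAddGroup G]
    (H : AddSubgroup G) (hd : Dense (H : Set G)) :
    (∀ N : AddSubgroup G, IsOpen (N : Set G) → N.FiniteIndex →
      (IsOpen ((N.addSubgroupOf H : AddSubgroup H) : Set H) ∧
        (N.addSubgroupOf H).FiniteIndex) ∧
      ((N.addSubgroupOf H).map H.subtype).topologicalClosure = N) ∧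
    ∀ M : AddSubgroup H, IsOpen (M : Set H) → M.FiniteIndex →
      (IsOpen (((M.map H.subtype).topologicalClosure : AddSubgroup G) : Set G) ∧
        (M.map H.subtype).topologicalClosure.FiniteIndex) ∧
      ((M.map H.subtype).topologicalClosure).addSubgroupOf H = M := by
  constructor
  · intro N hNopen hNfi
    refine ⟨⟨?_, ?_⟩, ?_⟩
    · exact hNopen.preimage continuous_subtype_val
    · exact ⟨by rw [aux_index H N hd hNopen]; exact hNfi.index_ne_zero⟩
    · rw [AddSubgroup.addSubgroupOf_map_subtype]
      apply SetLike.coe_injective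
      rw [AddSubgroup.topologicalClosure_coe]
      apply subset_antisymm
      · calc closure ((N ⊓ H : AddSubgroup G) : Set G)
            ⊆ closure (N : Set G) := closure_mono (by simp)
          _ = (N : Set G) := (N.isClosed_of_isOpen hNopen).closure_eq
      · intro n hn
        rw [mem_closure_iff]
        intro U hU hnU
        have hopen : IsOpen (U ∩ (N : Set G)) := hU.inter hNopen
        obtain ⟨x, hxH, hxUN⟩ := hd.exists_mem_open hopen ⟨n, hnU, hn⟩
        exact ⟨x, hxUN.1, by simp [hxUN.2, hxH]⟩
  · intro M hMopen hMfi
    obtain ⟨U, hUopen, hUM⟩ := isOpen_induced_iff.mp hMopen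
    -- U is an open set of G with Subtype.val ⁻¹' U = M
    have hUsub : U ⊆ closure ((M.map H.subtype : AddSubgroup G) : Set G) := by
      intro u hu
      rw [mem_closure_iff]
      intro V hV huV
      have hopen : IsOpen (V ∩ U) := hV.inter hUopen
      obtain ⟨x, hxH, hxVU⟩ := hd.exists_mem_open hopen ⟨u, huV, hu⟩
      refine ⟨x, hxVU.1, ⟨⟨x, hxH⟩, ?_, rfl⟩⟩
      rw [← hUM]; exact hxVU.2
    have hle : U ⊆ ((M.map H.subtype).topologicalClosure : Set G) := by
      rwa [AddSubgroup.topologicalClosure_coe]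
    have h0U : (0 : G) ∈ U := by
      have : ((0 : H) : G) ∈ U := by rw [← Set.mem_preimage, hUM]; exact M.zero_mem
      simpa using this
    have hNopen : IsOpen (((M.map H.subtype).topologicalClosure : AddSubgroup G) : Set G) :=
      AddSubgroup.isOpen_of_mem_nhds _ (Filter.mem_of_superset (hUopen.mem_nhds h0U) hle)
    refine ⟨⟨hNopen, ?_⟩, ?_⟩
    · refine ⟨?_⟩
      rw [← aux_index H _ hd hNopen]
      have hle' : M ≤ ((M.map H.subtype).topologicalClosure).addSubgroupOf H := by
        intro x hx
        rw [AddSubgroup.mem_addSubgroupOf, SetLike.mem_coe.symm,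
          AddSubgroup.topologicalClosure_coe]
        exact subset_closure ⟨x, hx, rfl⟩
      exact ne_zero_of_dvd_ne_zero hMfi.index_ne_zero (AddSubgroup.index_dvd_of_le hle')
    · ext x
      rw [AddSubgroup.mem_addSubgroupOf, SetLike.mem_coe.symm,
        AddSubgroup.topologicalClosure_coe]
      have hclosed : IsClosed (M : Set H) :=
        M.isClosed_of_isOpen hMopen
      constructor
      · intro hx
        have : x ∈ closure (M : Set H) := by
          rw [closure_subtype]
          simpa [AddSubgroup.coe_map] using hx
        rwa [hclosed.closure_eq] at this
      · intro hx
        exact subset_closure ⟨x, hx, rfl⟩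
end

section
/- Let (G,τ) be a topological abelian group, φ: (G,τ) → (G,τ) a continuous endomorphism, and H a dense φ-invariant subgroup of G. Then ent*_τ(φ) = ent*_{τ|_H}(φ|_H). -/
open Filter Topology ENNReal

variable {G : Type*} [AddCommGroup G]

section aux

variable [TopologicalSpace G] [IsTopologicalAddGroup G]

/-- If `N` is open and `H` is dense, then `N ⊔ H = ⊤`. -/
lemma sup_eq_top_of_open_dense {N H : AddSubgroup G} (hN : IsOpen (N : Set G))
    (hd : Dense (H : Set G)) : N ⊔ H = ⊤ := by
  rw [eq_top_iff]
  intro g _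
  have hopen : IsOpen ((fun x => x - g) ⁻¹' (N : Set G)) :=
    hN.preimage (continuous_id.sub continuous_const)
  have hne : ((fun x => x - g) ⁻¹' (N : Set G)).Nonempty :=
    ⟨g, by simp [N.zero_mem]⟩
  obtain ⟨h, hh1, hh2⟩ := hd.inter_open_nonempty _ hopen hne
  rw [AddSubgroup.mem_sup]
  exact ⟨-(h - g), N.neg_mem hh1, h, hh2, by abel⟩

/-- Index transfer: if `N` is open and `H` is dense, `(N.addSubgroupOf H).index = N.index`. -/
lemma index_addSubgroupOf_eq {N H : AddSubgroup G} (hN : IsOpen (N : Set G))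
    (hd : Dense (H : Set G)) : (N.addSubgroupOf H).index = N.index := by
  have : N.relIndex H = N.index := by
    rw [← AddSubgroup.relIndex_sup_left, sup_eq_top_of_open_dense hN hd,
      AddSubgroup.relIndex_top_right]
  exact this

lemma isOpen_Bsub {φ : AddMonoid.End G} (hφ : Continuous φ) {N : AddSubgroup G}
    (hN : IsOpen (N : Set G)) (n : ℕ) : IsOpen ((Bsub φ N n : AddSubgroup G) : Set G) := by
  have hpow : ∀ i : ℕ, Continuous (⇑(φ ^ i : AddMonoid.End G)) := by
    intro i
    induction i with
    | zero => simpa [pow_zero] using continuous_id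
    | succ k ih =>
      have : ⇑(φ ^ (k + 1) : AddMonoid.End G) = ⇑(φ ^ k : AddMonoid.End G) ∘ ⇑φ := by
        funext x
        rw [pow_succ]
        rfl
      rw [this]
      exact ih.comp hφ
  have : ((Bsub φ N n : AddSubgroup G) : Set G)
      = ⋂ i ∈ Finset.range n, (⇑(φ ^ i : AddMonoid.End G)) ⁻¹' (N : Set G) := by
    simp [Bsub, AddSubgroup.coe_iInf]
    rfl
  rw [this]
  exact isOpen_biInter_finset fun i _ => hN.preimage (hpow i)

end aux

section restrict

variable (φ : AddMonoid.End G) (H : AddSubgroup G) (hinv : ∀ x ∈ H, φ x ∈ H)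

noncomputable def psiEnd : AddMonoid.End H :=
  ((φ : G →+ G).comp H.subtype).codRestrict H (fun x => hinv x x.2)

lemma psi_pow_coe : ∀ (i : ℕ) (x : H),
    ((((psiEnd φ H hinv) ^ i : AddMonoid.End H) x : H) : G) = (φ ^ i : AddMonoid.End G) x := by
  intro i
  induction i with
  | zero => intro x; simp
  | succ k ih =>
    intro x
    have h1 : ((psiEnd φ H hinv) ^ (k + 1) : AddMonoid.End H) x
        = ((psiEnd φ H hinv) ^ k : AddMonoid.End H) ((psiEnd φ H hinv) x) := by
      rw [pow_succ]; rfl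
    have h2 : (φ ^ (k + 1) : AddMonoid.End G) (x : G) = (φ ^ k : AddMonoid.End G) (φ x) := by
      rw [pow_succ]; rfl
    rw [h1, h2, ih]
    rfl

lemma Bsub_addSubgroupOf (N : AddSubgroup G) (n : ℕ) :
    Bsub (psiEnd φ H hinv) (N.addSubgroupOf H) n = (Bsub φ N n).addSubgroupOf H := by
  unfold Bsub AddSubgroup.addSubgroupOf
  rw [AddSubgroup.comap_iInf]
  apply iInf_congr
  intro i
  rw [AddSubgroup.comap_iInf]
  apply iInf_congr
  intro _
  ext x
  show (((psiEnd φ H hinv ^ i : AddMonoid.End H) x : H) : G) ∈ N ↔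
    (φ ^ i : AddMonoid.End G) (x : G) ∈ N
  rw [psi_pow_coe φ H hinv i x]

end restrict

theorem stmt9 [TopologicalSpace G] [IsTopologicalAddGroup G]
    (φ : AddMonoid.End G) (hφ : Continuous φ)
    (H : AddSubgroup G) (hd : Dense (H : Set G)) (hinv : ∀ x ∈ H, φ x ∈ H) :
    entStar ‹TopologicalSpace G› φ
      = entStar (inferInstance : TopologicalSpace H)
          (((φ : G →+ G).comp H.subtype).codRestrict H (fun x => hinv x x.2)) := by
  set ψ : AddMonoid.End H := ((φ : G →+ G).comp H.subtype).codRestrict H (fun x => hinv x x.2)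
    with hψ
  have hψeq : ψ = psiEnd φ H hinv := rfl
  -- For N open in G, Hstar is preserved by restriction to H
  have key : ∀ N : AddSubgroup G, IsOpen (N : Set G) →
      Hstar ψ (N.addSubgroupOf H) = Hstar φ N := by
    intro N hN
    unfold Hstar
    congr 1
    funext n
    rw [hψeq, Bsub_addSubgroupOf φ H hinv N n,
      index_addSubgroupOf_eq (isOpen_Bsub hφ hN n) hd]
  apply le_antisymm
  · apply iSup₂_le
    intro N ⟨hNo, hNf⟩
    have hMo : IsOpen ((N.addSubgroupOf H : AddSubgroup H) : Set H) := by
      have : ((N.addSubgroupOf H : AddSubgroup H) : Set H) = Subtype.val ⁻¹' (N : Set G) := rfl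
      rw [this]
      exact hNo.preimage continuous_subtype_val
    have hMf : (N.addSubgroupOf H).FiniteIndex :=
      ⟨by rw [index_addSubgroupOf_eq hNo hd]; exact hNf.index_ne_zero⟩
    refine le_trans ?_ (le_iSup₂ (f := fun (M : AddSubgroup H)
      (_ : IsOpen (M : Set H) ∧ M.FiniteIndex) => ENNReal.ofReal (Hstar ψ M))
      (N.addSubgroupOf H) ⟨hMo, hMf⟩)
    rw [key N hNo]
  · apply iSup₂_le
    intro M ⟨hMo, hMf⟩
    -- construct N := topological closure of image of M
    set N : AddSubgroup G := (M.map H.subtype).topologicalClosure with hNdef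
    obtain ⟨U, hU, hUM⟩ := isOpen_induced_iff.mp hMo
    have himg : (Subtype.val '' (M : Set H)) = U ∩ (H : Set G) := by
      rw [← hUM, Set.image_preimage_eq_inter_range, Subtype.range_coe_subtype]
      rfl
    have hNcoe : (N : Set G) = closure (Subtype.val '' (M : Set H)) := by
      rfl
    have hUN : U ⊆ (N : Set G) := by
      rw [hNcoe, himg]
      exact hd.open_subset_closure_inter hU
    have h0U : (0 : G) ∈ U := by
      have : (0 : H) ∈ (M : Set H) := M.zero_mem
      rw [← hUM] at this
      exact this
    have hNopen : IsOpen (N : Set G) :=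
      AddSubgroup.isOpen_of_mem_nhds N (Filter.mem_of_superset (hU.mem_nhds h0U) hUN)
    -- N.addSubgroupOf H = M
    have hMclosed : IsClosed ((M : AddSubgroup H) : Set H) :=
      AddSubgroup.isClosed_of_isOpen M hMo
    have hrec : N.addSubgroupOf H = M := by
      ext x
      have h1 : x ∈ N.addSubgroupOf H ↔ (x : G) ∈ closure (Subtype.val '' (M : Set H)) := by
        rw [AddSubgroup.mem_addSubgroupOf, ← SetLike.mem_coe, hNcoe]
      have h2 : ((x : G) ∈ closure (Subtype.val '' (M : Set H)))
          ↔ x ∈ closure ((M : AddSubgroup H) : Set H) := closure_subtype.symm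
      rw [h1, h2, hMclosed.closure_eq]
      rfl
    have hNf : N.FiniteIndex :=
      ⟨by rw [← index_addSubgroupOf_eq hNopen hd, hrec]; exact hMf.index_ne_zero⟩
    refine le_trans ?_ (le_iSup₂ (f := fun (N' : AddSubgroup G)
      (_ : IsOpen (N' : Set G) ∧ N'.FiniteIndex) => ENNReal.ofReal (Hstar φ N'))
      N ⟨hNopen, hNf⟩)
    rw [← key N hNopen, hrec]
end

section
/- Let (G,τ) be a topological abelian group. Then G¹_τ, the intersection of all τ-open finite-index subgroups of G, equals the intersection of the kernels of all torsion elements of the group of continuous characters (G,τ)' = Hom_cont(G, ℝ/ℤ). -/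
open Filter Topology

private noncomputable def ratCircleHom : AddCircle (1 : ℚ) →+ AddCircle (1 : ℝ) :=
  QuotientAddGroup.map _ _ (Rat.castHom ℝ).toAddMonoidHom (by
    rintro q ⟨n, hn⟩
    refine AddSubgroup.mem_comap.mpr ⟨n, ?_⟩
    simp only [zsmul_eq_mul, mul_one] at hn ⊢
    rw [← hn]
    simp)

private lemma ratCircleHom_coe (q : ℚ) :
    ratCircleHom ((q : AddCircle (1 : ℚ))) = ((q : ℝ) : AddCircle (1 : ℝ)) := rfl

private lemma ratCircleHom_ne_zero {x : AddCircle (1 : ℚ)} (hx : x ≠ 0) :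
    ratCircleHom x ≠ 0 := by
  induction x using QuotientAddGroup.induction_on with
  | H q =>
    intro h
    rw [ratCircleHom_coe, AddCircle.coe_eq_zero_iff] at h
    obtain ⟨n, hn⟩ := h
    apply hx
    rw [AddCircle.coe_eq_zero_iff]
    refine ⟨n, ?_⟩
    simp only [zsmul_eq_mul, mul_one] at hn ⊢
    exact_mod_cast hn

private lemma torsion_mem_range (m : ℕ) [NeZero m] {x : AddCircle (1 : ℝ)} (hx : m • x = 0) :
    x ∈ Set.range (ZMod.toAddCircle (N := m)) := by
  induction x using QuotientAddGroup.induction_on with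
  | H r =>
    rw [← AddCircle.coe_nsmul, AddCircle.coe_eq_zero_iff] at hx
    obtain ⟨n, hn⟩ := hx
    refine ⟨(n : ZMod m), ?_⟩
    rw [ZMod.toAddCircle_intCast]
    have hm : (m : ℝ) ≠ 0 := Nat.cast_ne_zero.mpr (NeZero.ne m)
    have hr : (n : ℝ) / m = r := by
      simp only [zsmul_eq_mul, mul_one, nsmul_eq_mul] at hn
      field_simp
      linarith [hn]
    rw [hr]

theorem stmt13 {G : Type*} [AddCommGroup G] [TopologicalSpace G] [IsTopologicalAddGroup G] :
    (⨅ N ∈ {N : AddSubgroup G | IsOpen (N : Set G) ∧ N.FiniteIndex}, N)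
      = ⨅ χ ∈ {χ : G →+ AddCircle (1 : ℝ) |
          Continuous χ ∧ ∃ m : ℕ, 0 < m ∧ m • χ = 0}, χ.ker := by
  apply le_antisymm
  · -- each torsion continuous character has open finite-index kernel
    refine le_iInf fun χ => le_iInf fun hχ => ?_
    obtain ⟨hcont, m, hm, hmχ⟩ := hχ
    haveI : NeZero m := ⟨hm.ne'⟩
    have htor : ∀ g : G, m • χ g = 0 := by
      intro g
      have := DFunLike.congr_fun hmχ g
      simpa using this
    have hrange : Set.range χ ⊆ Set.range (ZMod.toAddCircle (N := m)) := by
      rintro _ ⟨g, rfl⟩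
      exact torsion_mem_range m (htor g)
    have hfin : (Set.range χ).Finite :=
      (Set.finite_range _).subset hrange
    -- kernel is open
    have hFfin : (Set.range (ZMod.toAddCircle (N := m)) \ {0}).Finite :=
      (Set.finite_range _).diff
    have hFc : IsClosed (Set.range (ZMod.toAddCircle (N := m)) \ {0}) :=
      hFfin.isClosed
    have hkereq : (χ.ker : Set G) = χ ⁻¹' (Set.range (ZMod.toAddCircle (N := m)) \ {0})ᶜ := by
      ext g
      simp only [SetLike.mem_coe, AddMonoidHom.mem_ker, Set.mem_preimage, Set.mem_compl_iff,
        Set.mem_diff, Set.mem_singleton_iff, not_and, not_not]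
      constructor
      · intro h _; exact h
      · intro h; exact h (hrange ⟨g, rfl⟩)
    have hopen : IsOpen (χ.ker : Set G) := by
      rw [hkereq]
      exact hFc.isOpen_compl.preimage hcont
    haveI : Finite χ.range := by
      rw [← SetLike.coe_sort_coe, AddMonoidHom.coe_range]
      exact hfin.to_subtype
    haveI : χ.ker.FiniteIndex := AddSubgroup.finiteIndex_ker χ
    exact iInf₂_le χ.ker ⟨hopen, this⟩
  · refine le_iInf fun N => le_iInf fun hN => ?_
    obtain ⟨hNopen, hNfin⟩ := hN
    intro g hg
    by_contra hgN
    haveI : Finite (G ⧸ N) := AddSubgroup.finite_quotient_of_finiteIndex (H := N)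
    have hq : (QuotientAddGroup.mk' N g) ≠ 0 := by
      simpa [QuotientAddGroup.mk'_apply, QuotientAddGroup.eq_zero_iff] using hgN
    obtain ⟨c, hc⟩ := CharacterModule.exists_character_apply_ne_zero_of_ne_zero hq
    have cHom : (G ⧸ N) →+ AddCircle (1 : ℚ) := AddMonoidHom.mk' c (map_add c)
    set χ : G →+ AddCircle (1 : ℝ) :=
      (ratCircleHom.comp (AddMonoidHom.mk' c (map_add c))).comp (QuotientAddGroup.mk' N) with hχdef
    -- χ kills N
    have hχN : ∀ n ∈ N, χ n = 0 := by
      intro n hn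
      have : QuotientAddGroup.mk' N n = 0 := (QuotientAddGroup.eq_zero_iff n).mpr hn
      simp [hχdef, AddMonoidHom.comp_apply, this]
    -- χ is continuous (locally constant on cosets of the open subgroup N)
    have hcont : Continuous χ := by
      rw [continuous_def]
      intro S _
      rw [isOpen_iff_mem_nhds]
      intro x hx
      have hsub : (x + ·) '' (N : Set G) ⊆ χ ⁻¹' S := by
        rintro _ ⟨n, hn, rfl⟩
        have : χ (x + n) = χ x := by rw [map_add, hχN n hn, add_zero]
        rw [Set.mem_preimage, this]
        exact hx
      have hopen : IsOpen ((x + ·) '' (N : Set G)) :=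
        (isOpenMap_add_left x) _ hNopen
      have hmem : x ∈ (x + ·) '' (N : Set G) := ⟨0, N.zero_mem, add_zero x⟩
      exact Filter.mem_of_superset (hopen.mem_nhds hmem) hsub
    -- χ is torsion
    have hχtor : (Nat.card (G ⧸ N)) • χ = 0 := by
      ext g'
      have h0 : (Nat.card (G ⧸ N)) • (QuotientAddGroup.mk' N g') = 0 := card_nsmul_eq_zero'
      simp only [AddMonoidHom.nsmul_apply, AddMonoidHom.zero_apply, hχdef,
        AddMonoidHom.comp_apply]
      rw [← map_nsmul, ← map_nsmul, h0]
      simp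
    have hmpos : 0 < Nat.card (G ⧸ N) := Nat.card_pos
    -- g is in the kernel of χ
    have hgker : χ g = 0 := by
      have := (AddSubgroup.mem_iInf.mp hg) χ
      have := (AddSubgroup.mem_iInf.mp this) ⟨hcont, Nat.card (G ⧸ N), hmpos, hχtor⟩
      exact this
    -- but χ g ≠ 0
    have : χ g ≠ 0 := by
      simp only [hχdef, AddMonoidHom.comp_apply]
      exact ratCircleHom_ne_zero (by simpa using hc)
    exact this hgker
end

section
/- Let (G,τ) be a topological abelian group and φ: (G,τ) → (G,τ) a continuous endomorphism. Let τ_q be the quotient topology on G/G¹_τ, where G¹_τ is the intersection of all τ-open finite-index subgroups of G, and let φ¹ be the induced endomorphism of G/G¹_τ. Then ent*_τ(φ) = ent*_{τ_q}(φ¹). -/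
open Filter Topology ENNReal

variable {G : Type*} [AddCommGroup G]

theorem stmt15 [TopologicalSpace G] [IsTopologicalAddGroup G]
    (φ : AddMonoid.End G) (hφ : Continuous φ)
    (K : AddSubgroup G)
    (hK : K = ⨅ N ∈ {N : AddSubgroup G | IsOpen (N : Set G) ∧ N.FiniteIndex}, N)
    (hinv : K ≤ K.comap (φ : G →+ G)) :
    entStar ‹TopologicalSpace G› φ
      = entStar (inferInstance : TopologicalSpace (G ⧸ K))
          (QuotientAddGroup.map K K (φ : G →+ G) hinv) := by
  set π : G →+ G ⧸ K := QuotientAddGroup.mk' K with hπ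
  set ψ : AddMonoid.End (G ⧸ K) := QuotientAddGroup.map K K (φ : G →+ G) hinv with hψ
  have hsurj : Function.Surjective π := QuotientAddGroup.mk'_surjective K
  have hcomm : ∀ (i : ℕ) (x : G), (ψ ^ i) (π x) = π ((φ ^ i) x) := by
    intro i
    induction i with
    | zero => intro x; simp
    | succ n ih =>
      intro x
      rw [pow_succ, pow_succ]
      show (ψ^n) (ψ (π x)) = π ((φ^n) (φ x))
      rw [show ψ (π x) = π (φ x) from QuotientAddGroup.map_mk K K (φ : G →+ G) hinv x]
      exact ih (φ x)
  have hB : ∀ (N' : AddSubgroup (G ⧸ K)) (n : ℕ),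
      Bsub φ (N'.comap π) n = (Bsub ψ N' n).comap π := by
    intro N' n
    ext x
    simp only [Bsub, AddSubgroup.mem_comap, AddSubgroup.mem_iInf]
    constructor
    · intro h i hi; show (ψ ^ i) (π x) ∈ N'; rw [hcomm]; exact h i hi
    · intro h i hi; have := h i hi; change (ψ ^ i) (π x) ∈ N' at this; rw [hcomm] at this; exact this
  have hH : ∀ N' : AddSubgroup (G ⧸ K), Hstar φ (N'.comap π) = Hstar ψ N' := by
    intro N'
    unfold Hstar
    congr 1
    funext n
    rw [hB, AddSubgroup.index_comap_of_surjective _ hsurj]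
  apply le_antisymm
  · refine iSup_le fun N => iSup_le fun hN => ?_
    have hKN : K ≤ N := hK ▸ iInf₂_le N hN
    have hcm : (N.map π).comap π = N := by
      rw [AddSubgroup.comap_map_eq, QuotientAddGroup.ker_mk', sup_eq_left.mpr hKN]
    have hopen : IsOpen ((N.map π : AddSubgroup (G ⧸ K)) : Set (G ⧸ K)) := by
      have := QuotientAddGroup.isOpenMap_coe (N := K) _ hN.1
      simpa [AddSubgroup.coe_map, hπ] using this
    have hfi : (N.map π).FiniteIndex := by
      constructor
      have : (N.map π).index = N.index := by
        conv_rhs => rw [← hcm]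
        rw [AddSubgroup.index_comap_of_surjective _ hsurj]
      rw [this]; exact hN.2.index_ne_zero
    have := le_iSup₂ (f := fun (N' : AddSubgroup (G⧸K)) (_ : IsOpen (N' : Set (G⧸K)) ∧ N'.FiniteIndex) => ENNReal.ofReal (Hstar ψ N')) (N.map π) ⟨hopen, hfi⟩
    refine le_trans (le_of_eq ?_) this
    rw [← hH (N.map π), hcm]
  · refine iSup_le fun N' => iSup_le fun hN' => ?_
    have hopen : IsOpen ((N'.comap π : AddSubgroup G) : Set G) :=
      hN'.1.preimage QuotientAddGroup.continuous_mk
    have hfi : (N'.comap π).FiniteIndex := by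
      constructor
      rw [AddSubgroup.index_comap_of_surjective _ hsurj]
      exact hN'.2.index_ne_zero
    have := le_iSup₂ (f := fun (N : AddSubgroup G) (_ : IsOpen (N : Set G) ∧ N.FiniteIndex) => ENNReal.ofReal (Hstar φ N)) (N'.comap π) ⟨hopen, hfi⟩
    refine le_trans (le_of_eq ?_) this
    rw [hH]
end

section
/- Let (G,τ) be a topological abelian group, φ: (G,τ) → (G,τ) a continuous endomorphism, and H a connected φ-invariant subgroup of G. Then ent*_{τ|_H}(φ|_H) = 0, and ent*_τ(φ) = ent*_{τ_q}(φ̄), where φ̄ is the induced endomorphism of G/H with the quotient topology. -/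
open Filter Topology ENNReal

variable {G : Type*} [AddCommGroup G]

lemma Hstar_top (φ : AddMonoid.End G) : Hstar φ ⊤ = 0 := by
  have h : (fun n : ℕ => Real.log ((Bsub φ ⊤ n).index) / n) = fun _ => 0 := by
    funext n
    have : Bsub φ ⊤ n = ⊤ := by
      simp [Bsub]
      intro i _
      exact AddSubgroup.comap_top _
    simp [this]
  rw [Hstar, h]
  exact Filter.Tendsto.limUnder_eq tendsto_const_nhds

theorem stmt16 [TopologicalSpace G] [IsTopologicalAddGroup G]
    (φ : AddMonoid.End G) (hφ : Continuous φ)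
    (H : AddSubgroup G) (hconn : IsConnected (H : Set G))
    (hinv : H ≤ H.comap (φ : G →+ G)) :
    entStar (inferInstance : TopologicalSpace H)
        (((φ : G →+ G).comp H.subtype).codRestrict H (fun x => hinv x.2)) = 0 ∧
    entStar ‹TopologicalSpace G› φ
      = entStar (inferInstance : TopologicalSpace (G ⧸ H))
          (QuotientAddGroup.map H H (φ : G →+ G) hinv) := by
  set π := QuotientAddGroup.mk' H with hπ
  set ψ : AddMonoid.End (G ⧸ H) := QuotientAddGroup.map H H (φ : G →+ G) hinv with hψ
  constructor
  · -- part 1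
    refine le_antisymm (iSup₂_le fun N hN => ?_) (zero_le)
    have hCS : ConnectedSpace H := isConnected_iff_connectedSpace.mp hconn
    have hclop : IsClopen (N : Set H) := ⟨N.isClosed_of_isOpen hN.1, hN.1⟩
    have hNtop : N = ⊤ := by
      rw [← AddSubgroup.coe_eq_univ]
      exact hclop.eq_univ ⟨0, N.zero_mem⟩
    rw [hNtop]
    exact (congrArg ENNReal.ofReal (Hstar_top _)).le.trans (by simp)
  · -- part 2
    -- commuting powers
    have hcomm : ∀ (i : ℕ) (x : G), (ψ ^ i) (π x) = π ((φ ^ i) x) := by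
      intro i
      induction i with
      | zero => intro x; simp
      | succ n ih =>
        intro x
        rw [pow_succ, pow_succ]
        have h1 : (ψ ^ n * ψ) (π x) = (ψ ^ n) (ψ (π x)) := rfl
        have h2 : ψ (π x) = π (φ x) := QuotientAddGroup.map_mk' H H (φ : G →+ G) hinv x
        rw [h1, h2, ih]
        rfl
    -- Bsub correspondence
    have hB : ∀ (M : AddSubgroup (G ⧸ H)) (n : ℕ),
        Bsub φ (M.comap π) n = (Bsub ψ M n).comap π := by
      intro M n
      ext x
      simp only [Bsub, AddSubgroup.mem_iInf, AddSubgroup.mem_comap]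
      constructor
      · intro h i hi
        show (ψ ^ i) (π x) ∈ M
        rw [hcomm]
        exact h i hi
      · intro h i hi
        have := h i hi
        change (ψ ^ i) (π x) ∈ M at this
        rw [hcomm] at this
        exact this
    have hsurj : Function.Surjective π := QuotientAddGroup.mk'_surjective H
    have hHstar : ∀ M : AddSubgroup (G ⧸ H), Hstar φ (M.comap π) = Hstar ψ M := by
      intro M
      unfold Hstar
      congr 1
      funext n
      rw [hB, AddSubgroup.index_comap_of_surjective _ hsurj]
    refine le_antisymm (iSup₂_le fun N hN => ?_) (iSup₂_le fun M hM => ?_)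
    · -- N open finite index in G; H ≤ N
      have hclop : IsClopen (N : Set G) := ⟨N.isClosed_of_isOpen hN.1, hN.1⟩
      have hHN : H ≤ N := by
        intro x hx
        have h1 : (H : Set G) ⊆ connectedComponent (0 : G) :=
          hconn.isPreconnected.subset_connectedComponent H.zero_mem
        exact hclop.connectedComponent_subset N.zero_mem (h1 hx)
      set M := N.map π with hM
      have hcm : M.comap π = N := by
        rw [hM, AddSubgroup.comap_map_eq, QuotientAddGroup.ker_mk', sup_of_le_left hHN]
      have hMopen : IsOpen (M : Set (G ⧸ H)) := by
        have : (M : Set (G ⧸ H)) = π '' N := rfl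
        rw [this]
        exact QuotientAddGroup.isOpenMap_coe _ hN.1
      have hMfi : M.FiniteIndex := by
        constructor
        have : N.index = M.index := by
          rw [← hcm]; exact AddSubgroup.index_comap_of_surjective _ hsurj
        rw [← this]; exact hN.2.1
      calc ENNReal.ofReal (Hstar φ N) = ENNReal.ofReal (Hstar ψ M) := by rw [← hcm, hHstar]
        _ ≤ _ := le_iSup₂_of_le M ⟨hMopen, hMfi⟩ le_rfl
    · -- M open finite index in G⧸H
      set N := M.comap π with hN
      have hNopen : IsOpen (N : Set G) := by
        have : (N : Set G) = π ⁻¹' M := rfl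
        rw [this]
        exact hM.1.preimage continuous_quotient_mk'
      have hNfi : N.FiniteIndex := by
        constructor
        rw [hN, AddSubgroup.index_comap_of_surjective _ hsurj]
        exact hM.2.1
      calc ENNReal.ofReal (Hstar ψ M) = ENNReal.ofReal (Hstar φ N) := by rw [hHstar]
        _ ≤ _ := le_iSup₂_of_le N ⟨hNopen, hNfi⟩ le_rfl
end

section
/- Let (K,τ) be a compact abelian group, ψ: (K,τ) → (K,τ) a continuous endomorphism, and C an open finite-index subgroup of K. Then H*(ψ,C) = H_top(ψ, ζ(C)), where ζ(C) = {x + C : x ∈ K} is the (finite) open cover of K by cosets of C. In particular, for every n ≥ 1, the minimal cardinality of a subcover of ζ(C) ∨ ψ⁻¹ζ(C) ∨ … ∨ ψ^{-(n-1)}ζ(C) equals [K : B_n(ψ,C)]. -/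
open Filter Topology ENNReal

variable {G : Type*} [AddCommGroup G]

/-- Minimal cardinality of a finite subcover of `U`. -/
noncomputable def covN {X : Type*} [TopologicalSpace X] (U : Set (Set X)) : ℕ :=
  sInf {n : ℕ | ∃ F : Finset (Set X), ↑F ⊆ U ∧ ⋃₀ (F : Set (Set X)) = Set.univ ∧ F.card = n}

/-- `covTraj ψ U n = U ∨ ψ⁻¹U ∨ … ∨ ψ⁻ⁿU`. -/
def covTraj {X : Type*} (ψ : X → X) (U : Set (Set X)) : ℕ → Set (Set X)
  | 0 => U
  | n + 1 => Set.image2 (· ∩ ·) U ((fun s => ψ ⁻¹' s) '' covTraj ψ U n)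

/-- Topological entropy of `ψ` with respect to the cover `U`. -/
noncomputable def Htop {X : Type*} [TopologicalSpace X] (ψ : X → X) (U : Set (Set X)) : ℝ :=
  limUnder atTop fun n : ℕ => Real.log (covN (covTraj ψ U n)) / (n + 1)

/-- The cover of `K` by the cosets of the subgroup `C`. -/
def zeta {K : Type*} [AddCommGroup K] (C : AddSubgroup K) : Set (Set K) :=
  Set.range fun x : K => (fun y => x + y) '' (C : Set K)

lemma mem_Bsub_one {φ : AddMonoid.End G} {N : AddSubgroup G} {x : G} :
    x ∈ Bsub φ N 1 ↔ x ∈ N := by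
  rw [mem_Bsub]
  constructor
  · intro h; simpa using h 0 Nat.zero_lt_one
  · intro h i hi
    interval_cases i
    simpa using h

lemma mem_Bsub_succ {φ : AddMonoid.End G} {N : AddSubgroup G} {n : ℕ} {x : G} :
    x ∈ Bsub φ N (n + 1 + 1) ↔ x ∈ N ∧ φ x ∈ Bsub φ N (n + 1) := by
  simp only [mem_Bsub]
  constructor
  · intro h
    refine ⟨by simpa using h 0 (by omega), fun i hi => ?_⟩
    have := h (i + 1) (by omega)
    rw [pow_succ] at this
    exact this
  · rintro ⟨h0, h1⟩ i hi
    match i with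
    | 0 => simpa using h0
    | Nat.succ j =>
        rw [pow_succ]
        exact h1 j (by omega)

lemma mem_coset {K : Type*} [AddCommGroup K] {B : AddSubgroup K} {x y : K} :
    y ∈ (fun z => x + z) '' (B : Set K) ↔ y - x ∈ B := by
  constructor
  · rintro ⟨b, hb, rfl⟩; simpa using hb
  · intro h; exact ⟨y - x, h, by simp⟩

lemma coset_eq_of_mem {K : Type*} [AddCommGroup K] {B : AddSubgroup K} {x y : K}
    (h : y - x ∈ B) :
    (fun z => x + z) '' (B : Set K) = (fun z => y + z) '' (B : Set K) := by
  ext w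
  rw [mem_coset, mem_coset]
  constructor
  · intro hw; have := B.sub_mem hw h; simpa using this
  · intro hw; have := B.add_mem hw h; simpa [sub_add_sub_cancel] using this

/-- Every coset of `Bsub ψ C (n+1)` belongs to `covTraj ψ (zeta C) n`. -/
lemma coset_mem_covTraj {K : Type*} [AddCommGroup K] (ψ : AddMonoid.End K)
    (C : AddSubgroup K) : ∀ n : ℕ, ∀ x : K,
    (fun z => x + z) '' ((Bsub ψ C (n + 1) : AddSubgroup K) : Set K) ∈ covTraj (⇑ψ) (zeta C) n := by
  intro n
  induction n with
  | zero =>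
      intro x
      have : ((Bsub ψ C 1 : AddSubgroup K) : Set K) = (C : Set K) := by
        ext z; exact mem_Bsub_one
      rw [covTraj, this]
      exact ⟨x, rfl⟩
  | succ n ih =>
      intro x
      rw [covTraj]
      refine ⟨(fun z => x + z) '' (C : Set K), ⟨x, rfl⟩,
        (⇑ψ) ⁻¹' ((fun z => ψ x + z) '' ((Bsub ψ C (n + 1) : AddSubgroup K) : Set K)),
        ⟨_, ih (ψ x), rfl⟩, ?_⟩
      ext w
      simp only [Set.mem_inter_iff, Set.mem_preimage, mem_coset]
      rw [mem_Bsub_succ, map_sub]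

/-- Every element of `covTraj ψ (zeta C) n` is empty or a coset of `Bsub ψ C (n+1)`. -/
lemma covTraj_mem {K : Type*} [AddCommGroup K] (ψ : AddMonoid.End K)
    (C : AddSubgroup K) : ∀ n : ℕ, ∀ S ∈ covTraj (⇑ψ) (zeta C) n,
    S = ∅ ∨ ∃ x : K, S = (fun z => x + z) '' ((Bsub ψ C (n + 1) : AddSubgroup K) : Set K) := by
  intro n
  induction n with
  | zero =>
      rintro S ⟨x, rfl⟩
      right
      refine ⟨x, ?_⟩
      have : ((Bsub ψ C 1 : AddSubgroup K) : Set K) = (C : Set K) := by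
        ext z; exact mem_Bsub_one
      rw [this]
  | succ n ih =>
      rintro S hS
      rw [covTraj] at hS
      obtain ⟨U, hU, V, ⟨T, hT, rfl⟩, rfl⟩ := hS
      obtain ⟨x, rfl⟩ := hU
      rcases ih T hT with rfl | ⟨y, rfl⟩
      · left; simp
      · by_cases hne : ((fun z => x + z) '' (C : Set K) ∩
            (⇑ψ) ⁻¹' ((fun z => y + z) '' ((Bsub ψ C (n + 1) : AddSubgroup K) : Set K))) = ∅
        · left; exact hne
        · right
          obtain ⟨z, hz⟩ := Set.nonempty_iff_ne_empty.mpr hne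
          refine ⟨z, ?_⟩
          simp only [Set.mem_inter_iff, Set.mem_preimage, mem_coset] at hz
          obtain ⟨hz1, hz2⟩ := hz
          ext w
          simp only [Set.mem_inter_iff, Set.mem_preimage, mem_coset]
          rw [mem_Bsub_succ, map_sub]
          constructor
          · rintro ⟨h1, h2⟩
            refine ⟨by simpa using C.sub_mem h1 hz1, ?_⟩
            have := (Bsub ψ C (n + 1)).sub_mem h2 hz2
            rw [sub_sub_sub_cancel_right] at this
            exact this
          · rintro ⟨h1, h2⟩
            refine ⟨by simpa [sub_add_sub_cancel] using C.add_mem h1 hz1, ?_⟩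
            have := (Bsub ψ C (n + 1)).add_mem h2 hz2
            rw [sub_add_sub_cancel] at this
            exact this

lemma Bsub_finiteIndex_s17 {K : Type*} [AddCommGroup K] (ψ : AddMonoid.End K)
    {C : AddSubgroup K} (hfi : C.FiniteIndex) (n : ℕ) : (Bsub ψ C (n + 1)).FiniteIndex := by
  have comap_fi : ∀ (φ : K →+ K) (N : AddSubgroup K), N.FiniteIndex →
      (N.comap φ).FiniteIndex := by
    intro φ N hN
    constructor
    rw [AddSubgroup.index_comap]
    intro h0
    exact hN.index_ne_zero
      (zero_dvd_iff.mp (h0 ▸ AddSubgroup.relIndex_dvd_index_of_normal N φ.range))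
  induction n with
  | zero =>
      have : Bsub ψ C 1 = C := by ext z; exact mem_Bsub_one
      rw [this]; exact hfi
  | succ n ih =>
      have : Bsub ψ C (n + 1 + 1) = C ⊓ (Bsub ψ C (n + 1)).comap (ψ : K →+ K) := by
        ext z
        rw [mem_Bsub_succ, AddSubgroup.mem_inf]
        exact Iff.rfl
      rw [this]
      haveI := hfi
      haveI := comap_fi (ψ : K →+ K) _ ih
      infer_instance

/-- `covN` of a cover made of the cosets of a finite-index subgroup (plus possibly `∅`). -/
lemma covN_eq_index {K : Type*} [AddCommGroup K] [TopologicalSpace K]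
    (B : AddSubgroup K) (hB : B.FiniteIndex) (U : Set (Set K))
    (h1 : ∀ x : K, (fun z => x + z) '' (B : Set K) ∈ U)
    (h2 : ∀ S ∈ U, S = ∅ ∨ ∃ x : K, S = (fun z => x + z) '' (B : Set K)) :
    covN U = B.index := by
  classical
  haveI := hB
  have hfin : Finite (K ⧸ B) := inferInstance
  have : Fintype (K ⧸ B) := Fintype.ofFinite _
  have hcard : B.index = Fintype.card (K ⧸ B) := by
    rw [AddSubgroup.index_eq_card, Nat.card_eq_fintype_card]
  -- the candidate subcover: one coset per class
  set f : K ⧸ B → Set K := fun q => (fun z => Quotient.out q + z) '' (B : Set K) with hf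
  have key_mem : ∀ y : K, y ∈ f (QuotientAddGroup.mk y) := by
    intro y
    rw [hf, mem_coset]
    have : (QuotientAddGroup.mk (Quotient.out (QuotientAddGroup.mk y : K ⧸ B)) : K ⧸ B)
        = QuotientAddGroup.mk y := Quotient.out_eq _
    rw [QuotientAddGroup.eq] at this
    simpa [neg_add_eq_sub] using this
  have hF : ∃ F : Finset (Set K), ↑F ⊆ U ∧ ⋃₀ (F : Set (Set K)) = Set.univ ∧
      F.card ≤ B.index := by
    refine ⟨Finset.image f Finset.univ, ?_, ?_, ?_⟩
    · intro S hS
      simp only [Finset.coe_image, Finset.coe_univ, Set.image_univ, Set.mem_range] at hS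
      obtain ⟨q, rfl⟩ := hS
      exact h1 _
    · ext y
      simp only [Set.mem_univ, iff_true, Set.mem_sUnion]
      exact ⟨f (QuotientAddGroup.mk y),
        Finset.mem_coe.mpr (Finset.mem_image_of_mem f (Finset.mem_univ _)), key_mem y⟩
    · calc (Finset.image f Finset.univ).card ≤ Finset.univ.card := Finset.card_image_le
        _ = B.index := by rw [Finset.card_univ, hcard]
  -- any subcover has at least `B.index` elements
  have hlow : ∀ m ∈ {n : ℕ | ∃ F : Finset (Set K), ↑F ⊆ U ∧
      ⋃₀ (F : Set (Set K)) = Set.univ ∧ F.card = n}, B.index ≤ m := by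
    rintro m ⟨F, hFU, hFcov, rfl⟩
    -- map each class to an element of F containing its representative
    have hg : ∀ q : K ⧸ B, ∃ S ∈ F, Quotient.out q ∈ S := by
      intro q
      have : Quotient.out q ∈ ⋃₀ (F : Set (Set K)) := by rw [hFcov]; trivial
      obtain ⟨S, hS, hmem⟩ := this
      exact ⟨S, hS, hmem⟩
    choose g hgF hgmem using hg
    have hinj : Function.Injective g := by
      intro q q' h
      -- g q is a nonempty set of U, hence a coset, containing out q and out q'
      rcases h2 (g q) (hFU (hgF q)) with he | ⟨x, hx⟩
      · exact absurd (he ▸ hgmem q) (Set.notMem_empty _)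
      · have h1' : Quotient.out q - x ∈ B := by rw [← mem_coset, ← hx]; exact hgmem q
        have h2' : Quotient.out q' - x ∈ B := by
          rw [← mem_coset, ← hx, h]; exact hgmem q'
        have : Quotient.out q - Quotient.out q' ∈ B := by
          have := B.sub_mem h1' h2'
          rwa [sub_sub_sub_cancel_right] at this
        calc q = QuotientAddGroup.mk (Quotient.out q) := (Quotient.out_eq q).symm
          _ = QuotientAddGroup.mk (Quotient.out q') := by
              rw [QuotientAddGroup.eq]
              simpa [neg_add_eq_sub] using B.neg_mem this
          _ = q' := Quotient.out_eq q'
    calc B.index = Fintype.card (K ⧸ B) := hcard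
      _ = Finset.univ.card := (Finset.card_univ).symm
      _ ≤ F.card := Finset.card_le_card_of_injOn g (fun q _ => hgF q)
          (Function.Injective.injOn hinj)
  obtain ⟨F, hFU, hFcov, hFcard⟩ := hF
  have hmem : F.card ∈ {n : ℕ | ∃ F : Finset (Set K), ↑F ⊆ U ∧
      ⋃₀ (F : Set (Set K)) = Set.univ ∧ F.card = n} := ⟨F, hFU, hFcov, rfl⟩
  refine le_antisymm ?_ ?_
  · exact le_trans (Nat.sInf_le hmem) hFcard
  · exact le_csInf ⟨F.card, hmem⟩ hlow

theorem stmt17 {K : Type*} [AddCommGroup K] [TopologicalSpace K] [IsTopologicalAddGroup K]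
    [CompactSpace K] (ψ : AddMonoid.End K) (hψ : Continuous ψ)
    (C : AddSubgroup K) (hopen : IsOpen (C : Set K)) (hfi : C.FiniteIndex) :
    Hstar ψ C = Htop (⇑ψ) (zeta C) ∧
    ∀ n : ℕ, covN (covTraj (⇑ψ) (zeta C) n) = (Bsub ψ C (n + 1)).index := by
  have hcov : ∀ n : ℕ, covN (covTraj (⇑ψ) (zeta C) n) = (Bsub ψ C (n + 1)).index := by
    intro n
    exact covN_eq_index (Bsub ψ C (n + 1)) (Bsub_finiteIndex_s17 ψ hfi n)
      (covTraj (⇑ψ) (zeta C) n) (coset_mem_covTraj ψ C n) (covTraj_mem ψ C n)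
  refine ⟨?_, hcov⟩
  have hfun : (fun n : ℕ => Real.log (covN (covTraj (⇑ψ) (zeta C) n)) / (n + 1))
      = (fun n : ℕ => Real.log ((Bsub ψ C n).index) / n) ∘ (fun n : ℕ => n + 1) := by
    funext n
    simp only [Function.comp_apply, hcov n]
    push_cast
    ring_nf
  unfold Hstar Htop limUnder
  rw [hfun, ← Filter.map_map, Filter.map_add_atTop_eq_nat]
end

section
/- Let p be a prime, K = ℤ/pℤ, G = K^{(ℕ)} the direct sum of countably many copies of K, and β: G → G the restricted right Bernoulli shift given by β(x₀,x₁,x₂,…) = (0,x₀,x₁,…). Then the adjoint algebraic entropy ent*(β) is infinite; in fact for every positive integer m there exists a finite-index subgroup N of G with H*(β,N) ≥ m·log p. -/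
open Filter Topology ENNReal

variable {G : Type*} [AddCommGroup G]

open Finsupp in
/-- the coefficient sequence: `1` at positions `2^t` with `t ≡ r [MOD m]`. -/
noncomputable def aseq (p m r j : ℕ) : ZMod p :=
  open scoped Classical in if ∃ t, j = 2 ^ t ∧ t % m = r then 1 else 0

/-- the functional `x ↦ ∑_j aseq p m r j * x j`. -/
noncomputable def fr (p m r : ℕ) : (ℕ →₀ ZMod p) →ₗ[ZMod p] ZMod p :=
  Finsupp.lsum (ZMod p) fun j => aseq p m r j • LinearMap.id

lemma fr_single (p m r j : ℕ) (c : ZMod p) :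
    fr p m r (Finsupp.single j c) = aseq p m r j * c := by
  simp [fr, smul_eq_mul]

/-- the combined map whose kernel is `B_n`. -/
noncomputable def Phi (p m n : ℕ) :
    (ℕ →₀ ZMod p) →ₗ[ZMod p] (Fin n × Fin m → ZMod p) :=
  LinearMap.pi fun q =>
    (fr p m q.2) ∘ₗ Finsupp.lmapDomain (ZMod p) (ZMod p) (· + (q.1 : ℕ))

lemma Phi_apply (p m n : ℕ) (x : ℕ →₀ ZMod p) (q : Fin n × Fin m) :
    Phi p m n x q = fr p m q.2 (Finsupp.mapDomain (· + (q.1 : ℕ)) x) := by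
  simp [Phi]

/-- the key arithmetic fact forcing independence of the shifted functionals. -/
lemma key_arith {m n i i' r r' t t' : ℕ} (hi : i < n) (hi' : i' < n)
    (ht : t % m = r) (ht' : t' % m = r') (hbig : 2 * n + 2 ≤ 2 ^ t)
    (heq : 2 ^ t - i + i' = 2 ^ t') : i' = i ∧ r' = r := by
  have hii : i ≤ 2 ^ t := by omega
  have heq' : 2 ^ t + i' = 2 ^ t' + i := by omega
  have htt : t' = t := by
    rcases lt_trichotomy t' t with h | h | h
    · have h1 : 2 ^ (t' + 1) ≤ 2 ^ t := Nat.pow_le_pow_right (by norm_num) (by omega)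
      rw [pow_succ] at h1
      omega
    · exact h
    · have h1 : 2 ^ (t + 1) ≤ 2 ^ t' := Nat.pow_le_pow_right (by norm_num) (by omega)
      rw [pow_succ] at h1
      omega
  subst htt
  constructor
  · omega
  · omega

lemma exists_preimage (p m n : ℕ) (q : Fin n × Fin m) :
    ∃ x : ℕ →₀ ZMod p, Phi p m n x = Pi.single q 1 := by
  classical
  have hm : 0 < m := q.2.pos
  set t : ℕ := (q.2 : ℕ) + m * (2 * n + 2) with htdef
  have htm : t % m = (q.2 : ℕ) := by
    simp [htdef, Nat.add_mul_mod_self_left, Nat.mod_eq_of_lt q.2.2]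
  have hbig : 2 * n + 2 ≤ 2 ^ t := by
    have h1 : 2 * n + 2 ≤ t := by
      have := Nat.le_mul_of_pos_left (2 * n + 2) hm
      omega
    have h2 : t < 2 ^ t := Nat.lt_two_pow_self
    omega
  refine ⟨Finsupp.single (2 ^ t - (q.1 : ℕ)) 1, ?_⟩
  funext q'
  rw [Phi_apply, Finsupp.mapDomain_single, fr_single, mul_one, Pi.single_apply]
  by_cases hqq : q' = q
  · subst hqq
    rw [if_pos rfl]
    have hval : 2 ^ t - (q'.1 : ℕ) + (q'.1 : ℕ) = 2 ^ t := by
      have : (q'.1 : ℕ) ≤ 2 ^ t := by have := q'.1.2; omega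
      omega
    rw [hval, aseq, if_pos ⟨t, rfl, htm⟩]
  · rw [if_neg hqq, aseq, if_neg]
    rintro ⟨t', het', ht'm⟩
    obtain ⟨h1, h2⟩ := key_arith q.1.2 q'.1.2 htm ht'm hbig het'
    exact hqq (Prod.ext (Fin.ext h1) (Fin.ext h2))

lemma Phi_surjective (p m n : ℕ) : Function.Surjective (Phi p m n) := by
  classical
  choose g hg using fun q : Fin n × Fin m => exists_preimage p m n q
  intro v
  refine ⟨∑ q, v q • g q, ?_⟩
  rw [map_sum]
  have : ∀ q : Fin n × Fin m, Phi p m n (v q • g q) = Pi.single q (v q) := by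
    intro q
    rw [map_smul, hg]
    funext q'
    by_cases h : q' = q <;> simp [h, Pi.single_apply]
  simp_rw [this]
  exact Finset.univ_sum_single v

/-- the finite-index subgroup `N = ⋂_{r<m} ker (fr r)`. -/
noncomputable def Nsub (p m : ℕ) : AddSubgroup (ℕ →₀ ZMod p) :=
  (⨅ r ∈ Finset.range m, LinearMap.ker (fr p m r)).toAddSubgroup

lemma mem_Nsub (p m : ℕ) (x : ℕ →₀ ZMod p) :
    x ∈ Nsub p m ↔ ∀ r < m, fr p m r x = 0 := by
  simp [Nsub, Submodule.mem_toAddSubgroup, Submodule.mem_iInf]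

lemma shift_pow_apply {p : ℕ} (φ : AddMonoid.End (ℕ →₀ ZMod p))
    (hφ : ∀ y, φ y = Finsupp.mapDomain (· + 1) y) (i : ℕ) (x : ℕ →₀ ZMod p) :
    (φ ^ i) x = Finsupp.mapDomain (· + i) x := by
  induction i generalizing x with
  | zero =>
      have h : (fun a : ℕ => a + 0) = id := by funext a; simp
      rw [pow_zero, h, Finsupp.mapDomain_id, AddMonoid.End.one_apply]
  | succ i ih =>
      have hmul : (φ ^ (i + 1)) x = (φ ^ i) (φ x) := by rw [pow_succ]; rfl
      rw [hmul, hφ, ih]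
      have h : (fun a : ℕ => a + (i + 1)) = (fun a : ℕ => a + i) ∘ (fun a : ℕ => a + 1) := by
        funext a; simp only [Function.comp_apply]; omega
      rw [h, Finsupp.mapDomain_comp]

lemma Bsub_mem_iff (p m n : ℕ) (x : ℕ →₀ ZMod p) :
    x ∈ Bsub (Finsupp.mapDomain.addMonoidHom (· + 1) :
        (ℕ →₀ ZMod p) →+ (ℕ →₀ ZMod p)) (Nsub p m) n ↔
      ∀ i < n, ∀ r < m, fr p m r (Finsupp.mapDomain (· + i) x) = 0 := by
  simp only [Bsub, AddSubgroup.mem_iInf, AddSubgroup.mem_comap, Finset.mem_range]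
  constructor
  · intro h i hi r hr
    have := (mem_Nsub p m _).1 (h i hi)
    rw [← shift_pow_apply (Finsupp.mapDomain.addMonoidHom (· + 1)) (fun _ => rfl) i x]
    exact this r hr
  · intro h i hi
    refine (mem_Nsub p m _).2 ?_
    intro r hr
    have := h i hi r hr
    rw [← shift_pow_apply (Finsupp.mapDomain.addMonoidHom (· + 1)) (fun _ => rfl) i x] at this
    exact this

lemma Bsub_index (p m n : ℕ) (hp : p.Prime) :
    (Bsub (Finsupp.mapDomain.addMonoidHom (· + 1) :
        (ℕ →₀ ZMod p) →+ (ℕ →₀ ZMod p)) (Nsub p m) n).index = p ^ (n * m) := by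
  classical
  haveI : NeZero p := ⟨hp.pos.ne'⟩
  haveI : Fact p.Prime := ⟨hp⟩
  have hker : Bsub (Finsupp.mapDomain.addMonoidHom (· + 1) :
      (ℕ →₀ ZMod p) →+ (ℕ →₀ ZMod p)) (Nsub p m) n
      = AddMonoidHom.ker (Phi p m n).toAddMonoidHom := by
    ext x
    rw [Bsub_mem_iff, AddMonoidHom.mem_ker]
    constructor
    · intro h
      funext q
      rw [LinearMap.toAddMonoidHom_coe, Phi_apply]
      exact h q.1 q.1.2 q.2 q.2.2
    · intro h i hi r hr
      have := congrFun h (⟨i, hi⟩, ⟨r, hr⟩)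
      rw [LinearMap.toAddMonoidHom_coe, Phi_apply] at this
      exact this
  rw [hker, AddSubgroup.index_ker]
  have hrange : (Phi p m n).toAddMonoidHom.range = ⊤ :=
    AddMonoidHom.range_eq_top.2 (Phi_surjective p m n)
  rw [hrange]
  rw [Nat.card_congr AddSubgroup.topEquiv.toEquiv]
  rw [Nat.card_eq_fintype_card]
  rw [Fintype.card_fun, ZMod.card, Fintype.card_prod, Fintype.card_fin, Fintype.card_fin]

lemma Hstar_Nsub (p m : ℕ) (hp : p.Prime) :
    Hstar (Finsupp.mapDomain.addMonoidHom (· + 1) :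
        (ℕ →₀ ZMod p) →+ (ℕ →₀ ZMod p)) (Nsub p m) = m * Real.log p := by
  apply Filter.Tendsto.limUnder_eq
  apply Filter.Tendsto.congr' (f₁ := fun _ : ℕ => (m : ℝ) * Real.log p)
  · filter_upwards [eventually_ge_atTop 1] with n hn
    rw [Bsub_index p m n hp]
    push_cast
    rw [Real.log_pow]
    field_simp
    push_cast
    ring
  · exact tendsto_const_nhds

lemma Nsub_finiteIndex (p m : ℕ) (hp : p.Prime) : (Nsub p m).FiniteIndex := by
  constructor
  have hle : Bsub (Finsupp.mapDomain.addMonoidHom (· + 1) :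
      (ℕ →₀ ZMod p) →+ (ℕ →₀ ZMod p)) (Nsub p m) 1 ≤ Nsub p m := by
    intro x hx
    rw [Bsub_mem_iff] at hx
    rw [mem_Nsub]
    intro r hr
    have := hx 0 Nat.one_pos r hr
    have h0 : (fun a : ℕ => a + 0) = id := by funext a; simp
    rwa [h0, Finsupp.mapDomain_id] at this
  have hdvd := AddSubgroup.index_dvd_of_le hle
  rw [Bsub_index p m 1 hp] at hdvd
  intro h
  rw [h] at hdvd
  have := Nat.eq_zero_of_zero_dvd hdvd
  exact (pow_ne_zero _ hp.pos.ne') this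

theorem stmt19 (p : ℕ) (hp : p.Prime) :
    entStar (⊥ : TopologicalSpace (ℕ →₀ ZMod p))
        (Finsupp.mapDomain.addMonoidHom (· + 1) : (ℕ →₀ ZMod p) →+ (ℕ →₀ ZMod p)) = ⊤ ∧
    ∀ m : ℕ, 0 < m → ∃ N : AddSubgroup (ℕ →₀ ZMod p), N.FiniteIndex ∧
      (m : ℝ) * Real.log p ≤
        Hstar (Finsupp.mapDomain.addMonoidHom (· + 1) : (ℕ →₀ ZMod p) →+ (ℕ →₀ ZMod p)) N := by
  have hbound : ∀ m : ℕ, ENNReal.ofReal ((m : ℝ) * Real.log p) ≤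
      entStar (⊥ : TopologicalSpace (ℕ →₀ ZMod p))
        (Finsupp.mapDomain.addMonoidHom (· + 1) : (ℕ →₀ ZMod p) →+ (ℕ →₀ ZMod p)) := by
    intro m
    refine le_trans ?_ (le_iSup₂ (f := fun (N : AddSubgroup (ℕ →₀ ZMod p)) _ =>
      ENNReal.ofReal (Hstar (Finsupp.mapDomain.addMonoidHom (· + 1) :
        (ℕ →₀ ZMod p) →+ (ℕ →₀ ZMod p)) N)) (Nsub p m)
      ⟨@isOpen_discrete _ ⊥ (discreteTopology_bot _) _, Nsub_finiteIndex p m hp⟩)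
    rw [Hstar_Nsub p m hp]
  constructor
  · rw [eq_top_iff]
    have hlogp : 0 < Real.log p := Real.log_pos (by exact_mod_cast hp.one_lt)
    have htop : ⨆ m : ℕ, ENNReal.ofReal ((m : ℝ) * Real.log p) = ⊤ := by
      rw [iSup_eq_top]
      intro b hb
      obtain ⟨m, hm⟩ := exists_nat_gt (b.toReal / Real.log p)
      refine ⟨m, ?_⟩
      rw [ENNReal.lt_ofReal_iff_toReal_lt hb.ne]
      calc b.toReal = b.toReal / Real.log p * Real.log p := by field_simp
        _ < m * Real.log p := by
            exact mul_lt_mul_of_pos_right hm hlogp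
    rw [← htop]
    exact iSup_le hbound
  · intro m _
    exact ⟨Nsub p m, Nsub_finiteIndex p m hp, le_of_eq (Hstar_Nsub p m hp).symm⟩
end
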